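/- arXiv:1607.00736 — 3 statements merged into one kernel-verified Lean document; each statement's English description precedes it below -/
import Mathlib

section
/- For all positive integers p and q, ζ({1}^{p-1}, q+1) = ζ({1}^{q-1}, p+1), i.e. the multiple zeta value with p−1 leading ones followed by q+1 equals the one with q−1 leading ones followed by p+1. -/
/-- The multiple zeta value `ζ(α_1, …, α_r) = ∑_{1 ≤ k_1 < ⋯ < k_r} k_1^{-α_1} ⋯ k_r^{-α_r}`. -/
noncomputable def mzv {r : ℕ} (α : Fin r → ℕ) : ℝ :=
  ∑' k : {k : Fin r → ℕ+ // StrictMono k}, ∏ i, (1 : ℝ) / ((k.1 i : ℕ) : ℝ) ^ (α i)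

open scoped ENNReal
open Filter

namespace DrinfeldDualityAux

/-- Real weight `a! b! / (a+b)!`. -/
noncomputable def rV (a b : ℕ) : ℝ := (a.factorial * b.factorial : ℝ) / ((a + b).factorial : ℝ)

lemma rV_nonneg (a b : ℕ) : 0 ≤ rV a b := by
  unfold rV; positivity

lemma rV_eq_inv_choose (a b : ℕ) : rV a b = (((a + b).choose a : ℝ))⁻¹ := by
  have h := Nat.choose_mul_factorial_mul_factorial (Nat.le_add_right a b)
  rw [Nat.add_sub_cancel_left] at h
  unfold rV
  have h2 : ((a + b).choose a : ℝ) * (a.factorial * b.factorial) = ((a + b).factorial : ℝ) := by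
    exact_mod_cast congrArg (Nat.cast (R := ℝ)) (by rw [← h]; ring)
  have hne : (a.factorial * b.factorial : ℝ) ≠ 0 := by positivity
  have hc : (((a + b).choose a : ℕ) : ℝ) ≠ 0 := by
    exact_mod_cast (Nat.choose_pos (Nat.le_add_right a b)).ne'
  rw [← h2]
  field_simp

lemma rV_le (a b : ℕ) (hb : 0 < b) : rV a b ≤ ((a : ℝ) + 1)⁻¹ := by
  rw [rV_eq_inv_choose]
  have h1 : a + 1 ≤ (a + b).choose a := by
    calc a + 1 = (a + 1).choose a := (Nat.choose_succ_self_right a).symm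
    _ ≤ (a + b).choose a := Nat.choose_le_choose a (by omega)
  have h2 : (0:ℝ) < (a:ℝ) + 1 := by positivity
  apply inv_anti₀ h2
  exact_mod_cast h1

lemma key_identity (A m : ℕ) (hm : 0 < m) :
    rV (A + 1) m / (A + 1) = rV A m / m - rV (A + 1) m / m := by
  unfold rV
  have h1 : ((A + 1).factorial : ℝ) = (A + 1) * A.factorial := by
    rw [Nat.factorial_succ]; push_cast; ring
  have h2 : ((A + 1 + m).factorial : ℝ) = (A + m + 1) * (A + m).factorial := by
    rw [show A + 1 + m = (A + m) + 1 by ring, Nat.factorial_succ]; push_cast; ring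
  have hf1 : ((A + m).factorial : ℝ) ≠ 0 := by positivity
  have hf2 : (A.factorial : ℝ) ≠ 0 := by positivity
  have hf3 : (m.factorial : ℝ) ≠ 0 := by positivity
  have hm1 : (m : ℝ) ≠ 0 := by positivity
  have hA1 : ((A : ℝ) + 1) ≠ 0 := by positivity
  have hAm1 : ((A : ℝ) + m + 1) ≠ 0 := by positivity
  rw [h1, h2]
  push_cast
  field_simp
  ring

lemma rL2 (b m : ℕ) (hm : 0 < m) :
    HasSum (fun j : ℕ => rV (b + 1 + j) m / (b + 1 + j)) (rV b m / m) := by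
  have hpos : ∀ j : ℕ, 0 ≤ rV (b + 1 + j) m / (b + 1 + j) := by
    intro j
    apply div_nonneg (rV_nonneg _ _) (by positivity)
  rw [hasSum_iff_tendsto_nat_of_nonneg hpos]
  have hterm : ∀ j : ℕ, rV (b + 1 + j) m / (b + 1 + j)
      = rV (b + j) m / m - rV (b + (j + 1)) m / m := by
    intro j
    have h := key_identity (b + j) m hm
    rw [show b + 1 + j = (b + j) + 1 by ring, show b + (j+1) = (b+j) + 1 by ring,
      show ((b:ℝ) + 1 + (j:ℝ)) = ((b + j : ℕ) : ℝ) + 1 by push_cast; ring]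
    exact h
  have hsum : ∀ n : ℕ, ∑ j ∈ Finset.range n, rV (b + 1 + j) m / (b + 1 + j)
      = rV b m / m - rV (b + n) m / m := by
    intro n
    calc ∑ j ∈ Finset.range n, rV (b + 1 + j) m / (b + 1 + j)
        = ∑ j ∈ Finset.range n, ((fun i => rV (b + i) m / m) j - (fun i => rV (b + i) m / m) (j+1)) := by
          exact Finset.sum_congr rfl fun j _ => hterm j
      _ = rV (b + 0) m / m - rV (b + n) m / m := Finset.sum_range_sub' _ n
      _ = rV b m / m - rV (b + n) m / m := by norm_num
  simp only [hsum]
  have htail : Tendsto (fun n : ℕ => rV (b + n) m / m) atTop (nhds 0) := by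
    apply squeeze_zero (fun n => div_nonneg (rV_nonneg _ _) (by positivity))
      (g := fun n : ℕ => ((n : ℝ) + 1)⁻¹)
    · intro n
      have h1 : rV (b + n) m ≤ ((b + n : ℝ) + 1)⁻¹ := by
        have := rV_le (b + n) m hm
        push_cast at this ⊢; linarith
      have h2 : ((b + n : ℝ) + 1)⁻¹ ≤ ((n : ℝ) + 1)⁻¹ := by
        apply inv_anti₀ (by positivity); push_cast; linarith [Nat.cast_nonneg (α := ℝ) b]
      have h3 : rV (b + n) m / m ≤ rV (b + n) m := by
        apply div_le_self (rV_nonneg _ _)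
        exact_mod_cast hm
      linarith
    · exact tendsto_one_div_add_atTop_nhds_zero_nat |>.congr (by intro n; rw [one_div])
  have := (tendsto_const_nhds (x := rV b m / m) (f := atTop (α := ℕ))).sub htail
  simpa using this


/-- ENNReal weight `a! b! / (a+b)!`. -/
noncomputable def eV (a b : ℕ) : ℝ≥0∞ :=
  ((a.factorial : ℝ≥0∞) * (b.factorial : ℝ≥0∞)) / ((a + b).factorial : ℝ≥0∞)

lemma eV_symm (a b : ℕ) : eV a b = eV b a := by
  unfold eV; rw [Nat.add_comm, mul_comm]

lemma eV_ofReal (a b c : ℕ) (hc : 0 < c) :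
    eV a b * ((c : ℝ≥0∞))⁻¹ = ENNReal.ofReal (rV a b / c) := by
  unfold eV rV
  rw [ENNReal.ofReal_div_of_pos (by exact_mod_cast hc), ENNReal.ofReal_div_of_pos (by positivity),
    ENNReal.ofReal_mul (by positivity)]
  simp only [ENNReal.ofReal_natCast]
  rw [div_eq_mul_inv, div_eq_mul_inv]

lemma eV_ne_top (a b : ℕ) : eV a b ≠ ⊤ := by
  unfold eV
  apply ne_of_lt
  apply ENNReal.div_lt_top
  · exact ENNReal.mul_ne_top (ENNReal.natCast_ne_top _) (ENNReal.natCast_ne_top _)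
  · exact_mod_cast (Nat.factorial_pos (a+b)).ne'

lemma eL2 (b m : ℕ) (hm : 0 < m) :
    ∑' j : ℕ, eV (b + 1 + j) m * (((b + 1 + j : ℕ) : ℝ≥0∞))⁻¹ = eV b m * ((m : ℝ≥0∞))⁻¹ := by
  have h := rL2 b m hm
  have hterm : ∀ j : ℕ, eV (b + 1 + j) m * (((b + 1 + j : ℕ) : ℝ≥0∞))⁻¹
      = ENNReal.ofReal (rV (b + 1 + j) m / (b + 1 + j)) := by
    intro j
    rw [eV_ofReal _ _ _ (by omega)]
    congr 1
    push_cast; ring_nf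
  calc ∑' j : ℕ, eV (b + 1 + j) m * (((b + 1 + j : ℕ) : ℝ≥0∞))⁻¹
      = ∑' j : ℕ, ENNReal.ofReal (rV (b + 1 + j) m / (b + 1 + j)) := by
        exact tsum_congr hterm
    _ = ENNReal.ofReal (∑' j : ℕ, rV (b + 1 + j) m / (b + 1 + j)) := by
        refine (ENNReal.ofReal_tsum_of_nonneg (fun j => ?_) h.summable).symm
        have h1 : 0 ≤ rV (b+1+j) m := by
          unfold rV
          positivity
        positivity
    _ = ENNReal.ofReal (rV b m / m) := by rw [h.tsum_eq]
    _ = eV b m * ((m : ℝ≥0∞))⁻¹ := (eV_ofReal _ _ _ hm).symm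


abbrev SM (r : ℕ) := {k : Fin r → ℕ+ // StrictMono k}

noncomputable def PP {r : ℕ} (k : SM r) : ℝ≥0∞ := ∏ i, (((k.1 i : ℕ) : ℝ≥0∞))⁻¹

def bk {r : ℕ} (k : SM r) : ℕ := if h : 0 < r then (k.1 ⟨r - 1, by omega⟩ : ℕ) else 0

lemma strictMono_snoc {r : ℕ} (k : Fin r → ℕ+) (hk : StrictMono k) (a : ℕ+)
    (ha : ∀ i, k i < a) : StrictMono (Fin.snoc k a : Fin (r + 1) → ℕ+) := by
  intro i j hij
  rcases Fin.eq_castSucc_or_eq_last j with ⟨j', rfl⟩ | rfl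
  · have hi : i ≠ Fin.last r := by
      intro h; subst h
      exact absurd (hij.trans (Fin.castSucc_lt_last j')) (lt_irrefl _)
    obtain ⟨i', rfl⟩ | h := Fin.eq_castSucc_or_eq_last i
    · rw [Fin.snoc_castSucc, Fin.snoc_castSucc]
      exact hk (Fin.castSucc_lt_castSucc_iff.mp hij)
    · exact absurd h hi
  · have hi : i ≠ Fin.last r := ne_of_lt hij
    obtain ⟨i', rfl⟩ | h := Fin.eq_castSucc_or_eq_last i
    · rw [Fin.snoc_castSucc, Fin.snoc_last]
      exact ha i'
    · exact absurd h hi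

def smEquiv (r : ℕ) : SM (r + 1) ≃ (Σ k : SM r, {a : ℕ+ // ∀ i, k.1 i < a}) where
  toFun k := ⟨⟨Fin.init k.1, fun i j hij => k.2 (Fin.castSucc_lt_castSucc_iff.mpr hij)⟩,
    k.1 (Fin.last r), fun i => k.2 (Fin.castSucc_lt_last i)⟩
  invFun x := ⟨Fin.snoc x.1.1 x.2.1, strictMono_snoc _ x.1.2 _ x.2.2⟩
  left_inv k := Subtype.ext (Fin.snoc_init_self k.1)
  right_inv x := by
    obtain ⟨⟨k, hk⟩, a, ha⟩ := x
    refine Sigma.ext (Subtype.ext (by simp)) ?_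
    refine (Subtype.heq_iff_coe_eq ?_).mpr (by simp)
    intro x
    simp

lemma tsum_SM_succ (r : ℕ) (f : SM (r + 1) → ℝ≥0∞) :
    ∑' k : SM (r + 1), f k
      = ∑' k : SM r, ∑' a : {a : ℕ+ // ∀ i, k.1 i < a},
          f ⟨Fin.snoc k.1 a.1, strictMono_snoc _ k.2 _ a.2⟩ := by
  rw [← Equiv.tsum_eq (smEquiv r).symm f, ENNReal.tsum_sigma']
  rfl

lemma bk_cond_iff {r : ℕ} (k : SM r) (a : ℕ+) : (∀ i, k.1 i < a) ↔ bk k < (a : ℕ) := by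
  unfold bk
  split_ifs with h
  · constructor
    · intro hi
      exact_mod_cast hi ⟨r - 1, by omega⟩
    · intro hlt i
      have h1 : k.1 i ≤ k.1 ⟨r - 1, by omega⟩ := by
        apply k.2.monotone
        rw [Fin.le_def]
        simp only
        omega
      have : (k.1 i : ℕ) < (a : ℕ) := lt_of_le_of_lt (by exact_mod_cast h1) hlt
      exact_mod_cast this
  · constructor
    · intro _; exact a.2
    · intro _ i
      exact absurd i.pos (by omega)

def ioiEquiv (b : ℕ) : {a : ℕ+ // b < (a : ℕ)} ≃ ℕ where
  toFun a := (a : ℕ) - b - 1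
  invFun j := ⟨⟨b + 1 + j, by omega⟩, by show b < b + 1 + j; omega⟩
  left_inv a := by
    rcases a with ⟨⟨v, hv⟩, hb⟩
    refine Subtype.ext (Subtype.ext ?_)
    show b + 1 + (v - b - 1) = v
    have : b < v := hb
    omega
  right_inv j := by show b + 1 + j - b - 1 = j; omega

lemma bk_snoc {r : ℕ} (k : SM r) (a : ℕ+) (h : ∀ i, k.1 i < a) :
    bk (⟨Fin.snoc k.1 a, strictMono_snoc _ k.2 _ h⟩ : SM (r + 1)) = (a : ℕ) := by
  unfold bk
  rw [dif_pos (Nat.succ_pos r)]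
  have : (⟨r + 1 - 1, by omega⟩ : Fin (r + 1)) = Fin.last r := rfl
  rw [this]
  simp

lemma PP_snoc {r : ℕ} (k : SM r) (a : ℕ+) (h : ∀ i, k.1 i < a) :
    PP (⟨Fin.snoc k.1 a, strictMono_snoc _ k.2 _ h⟩ : SM (r + 1))
      = PP k * (((a : ℕ) : ℝ≥0∞))⁻¹ := by
  unfold PP
  rw [Fin.prod_univ_castSucc]
  simp

instance : Unique (SM 0) :=
  ⟨⟨⟨Fin.elim0, fun i => i.elim0⟩⟩, fun k => Subtype.ext (funext fun i => i.elim0)⟩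

lemma eL1 (q : ℕ) (m : ℕ) (hm : 0 < m) :
    ∑' l : SM q, PP l * eV (bk l) m = ((m : ℝ≥0∞))⁻¹ ^ q := by
  induction q with
  | zero =>
    rw [tsum_eq_single (default : SM 0) (fun k hk => absurd (Subsingleton.elim k default) hk)]
    have h1 : PP (default : SM 0) = 1 := by
      unfold PP; simp
    have h2 : bk (default : SM 0) = 0 := by unfold bk; simp
    rw [h1, h2, pow_zero, one_mul]
    unfold eV
    simp [Nat.factorial_zero]
    exact ENNReal.div_self (by exact_mod_cast (Nat.factorial_pos m).ne') (ENNReal.natCast_ne_top _)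
  | succ q ih =>
    rw [tsum_SM_succ q (fun l => PP l * eV (bk l) m)]
    have hinner : ∀ k : SM q,
        (∑' a : {a : ℕ+ // ∀ i, k.1 i < a},
          PP (⟨Fin.snoc k.1 a.1, strictMono_snoc _ k.2 _ a.2⟩ : SM (q+1))
            * eV (bk (⟨Fin.snoc k.1 a.1, strictMono_snoc _ k.2 _ a.2⟩ : SM (q+1))) m)
        = PP k * (eV (bk k) m * ((m : ℝ≥0∞))⁻¹) := by
      intro k
      have hre : ∀ a : {a : ℕ+ // ∀ i, k.1 i < a},
          PP (⟨Fin.snoc k.1 a.1, strictMono_snoc _ k.2 _ a.2⟩ : SM (q+1))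
            * eV (bk (⟨Fin.snoc k.1 a.1, strictMono_snoc _ k.2 _ a.2⟩ : SM (q+1))) m
          = PP k * ((((a.1 : ℕ) : ℝ≥0∞))⁻¹ * eV ((a.1 : ℕ)) m) := by
        intro a
        rw [PP_snoc k a.1 a.2, bk_snoc k a.1 a.2]
        ring
      rw [tsum_congr hre, ENNReal.tsum_mul_left]
      congr 1
      -- reindex over the subtype
      rw [← Equiv.tsum_eq (Equiv.subtypeEquivRight (fun a => bk_cond_iff k a)).symm
        (fun a => (((a.1 : ℕ) : ℝ≥0∞))⁻¹ * eV ((a.1 : ℕ)) m)]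
      simp only [Equiv.subtypeEquivRight_symm_apply]
      rw [← Equiv.tsum_eq (ioiEquiv (bk k)).symm
        (fun a => (((a.1 : ℕ) : ℝ≥0∞))⁻¹ * eV ((a.1 : ℕ)) m)]
      have hv2 : ∀ j : ℕ, (((ioiEquiv (bk k)).symm j).1 : ℕ) = bk k + 1 + j := fun j => rfl
      calc ∑' j : ℕ, (((((ioiEquiv (bk k)).symm j).1 : ℕ) : ℝ≥0∞))⁻¹
            * eV ((((ioiEquiv (bk k)).symm j).1 : ℕ)) m
          = ∑' j : ℕ, eV (bk k + 1 + j) m * (((bk k + 1 + j : ℕ) : ℝ≥0∞))⁻¹ := by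
            refine tsum_congr fun j => ?_
            rw [hv2 j, mul_comm]
        _ = eV (bk k) m * ((m : ℝ≥0∞))⁻¹ := eL2 (bk k) m hm
    rw [tsum_congr hinner]
    have : ∀ k : SM q, PP k * (eV (bk k) m * ((m : ℝ≥0∞))⁻¹)
        = (PP k * eV (bk k) m) * ((m : ℝ≥0∞))⁻¹ := fun k => by ring
    rw [tsum_congr this, ENNReal.tsum_mul_right, ih, pow_succ]


lemma bk_pos_eq {r : ℕ} (hr : 0 < r) (k : SM r) :
    bk k = (k.1 ⟨r - 1, by omega⟩ : ℕ) := dif_pos hr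

lemma bk_pos {r : ℕ} (hr : 0 < r) (k : SM r) : 0 < bk k := by
  rw [bk_pos_eq hr k]; exact (k.1 _).2

lemma mzv_toReal {r : ℕ} (α : Fin r → ℕ) :
    mzv α = (∑' k : SM r, ∏ i, (((k.1 i : ℕ) : ℝ≥0∞))⁻¹ ^ (α i)).toReal := by
  have hne : ∀ k : SM r, (∏ i, (((k.1 i : ℕ) : ℝ≥0∞))⁻¹ ^ (α i)) ≠ ⊤ := by
    intro k
    refine (ENNReal.prod_lt_top (fun i _ => ?_)).ne
    exact (ENNReal.pow_ne_top (ENNReal.inv_ne_top.mpr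
      (by exact_mod_cast (k.1 i).2.ne'))).lt_top
  rw [mzv, ENNReal.tsum_toReal_eq hne]
  refine tsum_congr fun k => ?_
  rw [ENNReal.toReal_prod]
  refine Finset.prod_congr rfl fun i _ => ?_
  rw [ENNReal.toReal_pow, ENNReal.toReal_inv, ENNReal.toReal_natCast, one_div, inv_pow]

lemma pow_prod (p q : ℕ) (hp : 0 < p) (k : SM p) :
    (∏ i, (((k.1 i : ℕ) : ℝ≥0∞))⁻¹ ^ (if i.val = p - 1 then q + 1 else 1))
      = PP k * (((bk k : ℕ) : ℝ≥0∞))⁻¹ ^ q := by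
  rw [bk_pos_eq hp k]
  set i0 : Fin p := ⟨p - 1, by omega⟩ with hi0
  have step : ∀ i : Fin p,
      (((k.1 i : ℕ) : ℝ≥0∞))⁻¹ ^ (if i.val = p - 1 then q + 1 else 1)
      = (((k.1 i : ℕ) : ℝ≥0∞))⁻¹ * (if i = i0 then (((k.1 i : ℕ) : ℝ≥0∞))⁻¹ ^ q else 1) := by
    intro i
    by_cases h : i = i0
    · rw [if_pos h, if_pos (show i.val = p - 1 by rw [h])]
      rw [pow_succ']
    · rw [if_neg h, if_neg (fun hv => h (Fin.ext (by rw [hv])))]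
      rw [pow_one, mul_one]
  rw [Finset.prod_congr rfl (fun i _ => step i), Finset.prod_mul_distrib]
  congr 1
  rw [Finset.prod_ite_eq' Finset.univ i0 (fun i => (((k.1 i : ℕ) : ℝ≥0∞))⁻¹ ^ q),
    if_pos (Finset.mem_univ i0)]

lemma mzv_eq (p q : ℕ) (hp : 0 < p) :
    mzv (fun i : Fin p => if i.val = p - 1 then q + 1 else 1)
      = (∑' k : SM p, ∑' l : SM q, PP k * PP l * eV (bk l) (bk k)).toReal := by
  rw [mzv_toReal]
  congr 1
  calc ∑' k : SM p, ∏ i, (((k.1 i : ℕ) : ℝ≥0∞))⁻¹ ^ (if i.val = p - 1 then q + 1 else 1)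
      = ∑' k : SM p, PP k * (((bk k : ℕ) : ℝ≥0∞))⁻¹ ^ q :=
        tsum_congr fun k => pow_prod p q hp k
    _ = ∑' k : SM p, ∑' l : SM q, PP k * PP l * eV (bk l) (bk k) := by
        refine tsum_congr fun k => ?_
        rw [← eL1 q (bk k) (bk_pos hp k), ← ENNReal.tsum_mul_left]
        exact tsum_congr fun l => by ring


end DrinfeldDualityAux


open DrinfeldDualityAux in
/-- Drinfel'd duality: `ζ({1}^{p-1}, q+1) = ζ({1}^{q-1}, p+1)`. -/
theorem drinfeld_duality (p q : ℕ) (hp : 0 < p) (hq : 0 < q) :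
    mzv (fun i : Fin p => if i.val = p - 1 then q + 1 else 1) =
    mzv (fun i : Fin q => if i.val = q - 1 then p + 1 else 1) := by
  rw [mzv_eq p q hp, mzv_eq q p hq]
  congr 1
  rw [ENNReal.tsum_comm]
  refine tsum_congr fun l => tsum_congr fun k => ?_
  rw [eV_symm]
  ring
end

section
/- For positive integers p, q and nonnegative integer m, ∑_{|α|=p+m} ζ(α_1,…,α_{p−1}, α_p + q) = ∑_{|β|=q+m} ζ(β_1,…,β_{q−1}, β_q + p), where the first sum is over p-tuples of positive integers α with α_1+⋯+α_p = p+m and the second over q-tuples of positive integers β with β_1+⋯+β_q = q+m. -/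
open Filter
open scoped ENNReal NNReal

namespace Ohno

noncomputable def cc (x : ℝ≥0∞) (a : ℕ) : ℝ≥0∞ := (a : ℝ≥0∞) - x

noncomputable def GG (x : ℝ≥0∞) (t : ℕ) : ℝ≥0∞ := ∏ k ∈ Finset.range t, cc x (k + 1)

noncomputable def FF (x : ℝ≥0∞) (m n : ℕ) : ℝ≥0∞ := GG x m * GG x n * (GG x (m + n))⁻¹

noncomputable def ww (x : ℝ≥0∞) (k m : ℕ) : ℝ≥0∞ := ((m : ℝ≥0∞) ^ (k - 1))⁻¹ * (cc x m)⁻¹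

variable {x : ℝ≥0∞}

lemma cc_ne_top (a : ℕ) : cc x a ≠ ⊤ :=
  ((tsub_le_self).trans_lt (ENNReal.natCast_lt_top a)).ne

lemma cc_ne_zero (hx : x < 1) {a : ℕ} (ha : 1 ≤ a) : cc x a ≠ 0 :=
  (tsub_pos_of_lt (hx.trans_le (by exact_mod_cast ha))).ne'

lemma cc_le (a : ℕ) : cc x a ≤ (a : ℝ≥0∞) := tsub_le_self

lemma one_le_cc (hx : x ≤ 1) {a : ℕ} (ha : 2 ≤ a) : 1 ≤ cc x a := by
  have h1 : (1:ℝ≥0∞) ≤ ((a - 1 : ℕ) : ℝ≥0∞) := by exact_mod_cast (by omega : 1 ≤ a - 1)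
  have h2 : ((a - 1 : ℕ) : ℝ≥0∞) = (a : ℝ≥0∞) - 1 := by
    rw [ENNReal.natCast_sub, Nat.cast_one]
  rw [cc]
  exact le_trans (h2 ▸ h1) (tsub_le_tsub_left hx _)

lemma nat_le_cc (hx : x ≤ 1) (a : ℕ) : (a : ℝ≥0∞) ≤ cc x (a + 1) := by
  rw [cc]
  push_cast
  calc (a : ℝ≥0∞) = (a : ℝ≥0∞) + 1 - 1 := by
        rw [ENNReal.add_sub_cancel_right ENNReal.one_ne_top]
    _ ≤ (a : ℝ≥0∞) + 1 - x := tsub_le_tsub_left hx _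

lemma GG_ne_zero (hx : x < 1) (t : ℕ) : GG x t ≠ 0 := by
  rw [GG, Finset.prod_ne_zero_iff]
  exact fun k _ => cc_ne_zero hx (Nat.le_add_left 1 k)

lemma GG_ne_top (t : ℕ) : GG x t ≠ ⊤ :=
  (ENNReal.prod_lt_top (fun a _ => (cc_ne_top _).lt_top)).ne

lemma FF_ne_top (hx : x < 1) (m n : ℕ) : FF x m n ≠ ⊤ :=
  ENNReal.mul_ne_top (ENNReal.mul_ne_top (GG_ne_top m) (GG_ne_top n))
    (ENNReal.inv_ne_top.2 (GG_ne_zero hx _))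

lemma GG_zero : GG x 0 = 1 := by simp [GG]

lemma GG_succ (t : ℕ) : GG x (t + 1) = GG x t * cc x (t + 1) := Finset.prod_range_succ _ _

lemma FF_zero_right (hx : x < 1) (m : ℕ) : FF x m 0 = 1 := by
  rw [FF, GG_zero, add_zero, mul_one, ENNReal.mul_inv_cancel (GG_ne_zero hx m) (GG_ne_top m)]

lemma FF_zero_left (hx : x < 1) (n : ℕ) : FF x 0 n = 1 := by
  rw [FF, GG_zero, zero_add, one_mul, ENNReal.mul_inv_cancel (GG_ne_zero hx n) (GG_ne_top n)]

lemma FF_comm (m n : ℕ) : FF x m n = FF x n m := by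
  rw [FF, FF, add_comm m n, mul_comm (GG x m) (GG x n)]

lemma cc_add_nat (hx : x < 1) (a n : ℕ) : cc x (a + 1) + (n : ℝ≥0∞) = cc x (a + 1 + n) := by
  rw [cc, cc]
  have hxle : x ≤ ((a + 1 : ℕ) : ℝ≥0∞) := le_trans hx.le (by exact_mod_cast Nat.le_add_left 1 a)
  rw [ENNReal.sub_add_eq_add_sub hxle (hx.trans_le le_top).ne]
  push_cast
  ring_nf

/-- The key algebraic identity for the connector. -/
lemma keyF (hx : x < 1) (a n : ℕ) :
    FF x a n = FF x (a + 1) n + FF x (a + 1) n * n * (cc x (a + 1))⁻¹ := by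
  have hα0 : cc x (a + 1) ≠ 0 := cc_ne_zero hx (Nat.le_add_left 1 a)
  have hαt : cc x (a + 1) ≠ ⊤ := cc_ne_top _
  have hβ0 : cc x (a + n + 1) ≠ 0 := cc_ne_zero hx (Nat.le_add_left 1 _)
  have hβt : cc x (a + n + 1) ≠ ⊤ := cc_ne_top _
  have step1 : FF x (a + 1) n + FF x (a + 1) n * n * (cc x (a + 1))⁻¹
      = FF x (a + 1) n * cc x (a + 1 + n) * (cc x (a + 1))⁻¹ := by
    rw [← cc_add_nat hx a n]
    have expand : FF x (a + 1) n * (cc x (a + 1) + n) * (cc x (a + 1))⁻¹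
        = FF x (a + 1) n * (cc x (a + 1) * (cc x (a + 1))⁻¹)
          + FF x (a + 1) n * ↑n * (cc x (a + 1))⁻¹ := by ring
    rw [expand, ENNReal.mul_inv_cancel hα0 hαt, mul_one]
  rw [step1]
  simp only [FF]
  rw [GG_succ a, show a + 1 + n = a + n + 1 by ring, GG_succ (a + n),
    ENNReal.mul_inv (Or.inl (GG_ne_zero hx _)) (Or.inl (GG_ne_top _))]
  calc GG x a * GG x n * (GG x (a + n))⁻¹
      = GG x a * GG x n * (GG x (a + n))⁻¹ *
        ((cc x (a + 1) * (cc x (a + 1))⁻¹) * ((cc x (a + n + 1))⁻¹ * cc x (a + n + 1))) := by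
        rw [ENNReal.mul_inv_cancel hα0 hαt, ENNReal.inv_mul_cancel hβ0 hβt, one_mul, mul_one]
    _ = GG x a * cc x (a + 1) * GG x n * ((GG x (a + n))⁻¹ * (cc x (a + n + 1))⁻¹) *
        cc x (a + n + 1) * (cc x (a + 1))⁻¹ := by ring

/-- General telescoping lemma in `ℝ≥0∞`. -/
lemma tele (g d : ℕ → ℝ≥0∞) (h : ∀ a, g a = g (a + 1) + d (a + 1))
    (h0 : Tendsto g atTop (nhds 0)) (b : ℕ) : ∑' j : ℕ, d (b + 1 + j) = g b := by
  have hpart : ∀ N, ∑ j ∈ Finset.range N, d (b + 1 + j) + g (b + N) = g b := by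
    intro N
    induction N with
    | zero => simp
    | succ N ih =>
      rw [Finset.sum_range_succ, add_assoc, show b + 1 + N = (b + N) + 1 by ring,
        show b + (N + 1) = (b + N) + 1 by ring, add_comm (d ((b+N)+1)) (g ((b+N)+1)),
        ← h (b + N)]
      exact ih
  have hlim1 : Tendsto (fun N : ℕ => ∑ j ∈ Finset.range N, d (b + 1 + j) + g (b + N)) atTop
      (nhds ((∑' j : ℕ, d (b + 1 + j)) + 0)) := by
    refine Filter.Tendsto.add (ENNReal.tendsto_nat_tsum _) ?_
    simpa [Function.comp_def, add_comm] using h0.comp (tendsto_add_atTop_nat b)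
  have hlim2 : Tendsto (fun N : ℕ => ∑ j ∈ Finset.range N, d (b + 1 + j) + g (b + N)) atTop
      (nhds (g b)) := by
    simp only [hpart]; exact tendsto_const_nhds
  have := tendsto_nhds_unique hlim1 hlim2
  rwa [add_zero] at this

lemma FF_le (hx : x < 1) (a n : ℕ) (hn : 1 ≤ n) :
    FF x a n ≤ GG x n * ((a : ℝ≥0∞))⁻¹ := by
  have h2 : GG x (a + n) = GG x a * ∏ j ∈ Finset.range n, cc x (a + j + 1) :=
    Finset.prod_range_add (fun k => cc x (k + 1)) a n
  have h3 : FF x a n = GG x n * (∏ j ∈ Finset.range n, cc x (a + j + 1))⁻¹ := by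
    rw [FF, h2, ENNReal.mul_inv (Or.inl (GG_ne_zero hx _)) (Or.inl (GG_ne_top _))]
    calc GG x a * GG x n * ((GG x a)⁻¹ * (∏ j ∈ Finset.range n, cc x (a + j + 1))⁻¹)
        = GG x n * (∏ j ∈ Finset.range n, cc x (a + j + 1))⁻¹ * (GG x a * (GG x a)⁻¹) := by ring
      _ = _ := by rw [ENNReal.mul_inv_cancel (GG_ne_zero hx _) (GG_ne_top _), mul_one]
  rw [h3]
  refine mul_le_mul_right ?_ _
  rw [ENNReal.inv_le_inv]
  obtain ⟨n', rfl⟩ : ∃ n', n = n' + 1 := ⟨n - 1, by omega⟩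
  calc (a : ℝ≥0∞) ≤ cc x (a + 0 + 1) := by rw [add_zero]; exact nat_le_cc hx.le a
    _ = 1 * cc x (a + 0 + 1) := (one_mul _).symm
    _ ≤ (∏ j ∈ Finset.range n', cc x (a + (j + 1) + 1)) * cc x (a + 0 + 1) :=
        mul_le_mul_left (Finset.one_le_prod' fun j _ => one_le_cc hx.le (by omega)) _
    _ = ∏ j ∈ Finset.range (n' + 1), cc x (a + j + 1) := (Finset.prod_range_succ' (fun j => cc x (a + j + 1)) n').symm

/-- The key telescoping identity. -/
lemma key (hx : x < 1) (b n : ℕ) (hn : 1 ≤ n) :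
    ∑' j : ℕ, FF x (b + 1 + j) n * (cc x (b + 1 + j))⁻¹ = FF x b n * ((n : ℝ≥0∞))⁻¹ := by
  have hn0 : (n : ℝ≥0∞) ≠ 0 := Nat.cast_ne_zero.mpr (by omega)
  have hnt : (n : ℝ≥0∞) ≠ ⊤ := ENNReal.natCast_ne_top n
  refine tele (fun a => FF x a n * ((n : ℝ≥0∞))⁻¹) (fun a => FF x a n * (cc x a)⁻¹) ?_ ?_ b
  · intro a
    rw [keyF hx a n, add_mul, mul_assoc (FF x (a+1) n * ↑n), mul_comm ((cc x (a+1))⁻¹) _,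
      ← mul_assoc, mul_assoc (FF x (a+1) n), ENNReal.mul_inv_cancel hn0 hnt, mul_one]
  · have hb : Tendsto (fun a : ℕ => GG x n * ((n:ℝ≥0∞))⁻¹ * ((a : ℝ≥0∞))⁻¹) atTop (nhds 0) := by
      have := ENNReal.Tendsto.const_mul (a := GG x n * ((n:ℝ≥0∞))⁻¹)
        ENNReal.tendsto_inv_nat_nhds_zero
        (Or.inr (ENNReal.mul_ne_top (GG_ne_top n) (ENNReal.inv_ne_top.2 hn0)))
      simpa using this
    refine tendsto_of_tendsto_of_tendsto_of_le_of_le tendsto_const_nhds hb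
      (fun a => zero_le) (fun a => ?_)
    calc FF x a n * ((n:ℝ≥0∞))⁻¹ ≤ (GG x n * ((a : ℝ≥0∞))⁻¹) * ((n:ℝ≥0∞))⁻¹ :=
          mul_le_mul_left (FF_le hx a n hn) _
      _ = GG x n * ((n:ℝ≥0∞))⁻¹ * ((a : ℝ≥0∞))⁻¹ := by ring


noncomputable def Psi (x : ℝ≥0∞) : List ℕ → ℕ → ℕ → ℝ≥0∞
  | [], b, n => FF x b n
  | k :: ks, b, n => ∑' d : ℕ, ww x k (b + 1 + d) * Psi x ks (b + 1 + d) n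

noncomputable def Th (x : ℝ≥0∞) (ks : List ℕ) : List ℕ → ℕ → ℝ≥0∞
  | [], b => Psi x ks 0 b
  | l :: ls, b => ∑' d : ℕ, ww x l (b + 1 + d) * Th x ks ls (b + 1 + d)

@[simp] lemma Psi_nil (b n : ℕ) : Psi x [] b n = FF x b n := rfl
lemma Psi_cons (k : ℕ) (ks : List ℕ) (b n : ℕ) :
    Psi x (k :: ks) b n = ∑' d : ℕ, ww x k (b + 1 + d) * Psi x ks (b + 1 + d) n := rfl
@[simp] lemma Th_nil (ks : List ℕ) (b : ℕ) : Th x ks [] b = Psi x ks 0 b := rfl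
lemma Th_cons (ks : List ℕ) (l : ℕ) (ls : List ℕ) (b : ℕ) :
    Th x ks (l :: ls) b = ∑' d : ℕ, ww x l (b + 1 + d) * Th x ks ls (b + 1 + d) := rfl

lemma ww_one (m : ℕ) : ww x 1 m = (cc x m)⁻¹ := by simp [ww]

lemma ww_mul_inv (k m : ℕ) (hk : 1 ≤ k) :
    ww x k m * ((m : ℝ≥0∞))⁻¹ = ww x (k + 1) m := by
  rw [ww, ww, show k + 1 - 1 = k by omega]
  have hpow : (m : ℝ≥0∞) ^ k = (m : ℝ≥0∞) ^ (k - 1) * m := by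
    rw [← pow_succ]
    congr 1
    omega
  rw [hpow, ENNReal.mul_inv (Or.inr (ENNReal.natCast_ne_top m))
    (Or.inl (by exact ENNReal.pow_ne_top (ENNReal.natCast_ne_top m)))]
  ring

/-- Transport 1 : stripping a trailing `1` on the left. -/
lemma T1 (hx : x < 1) : ∀ (ks : List ℕ) (b n : ℕ), 1 ≤ n →
    Psi x (ks ++ [1]) b n = Psi x ks b n * ((n : ℝ≥0∞))⁻¹ := by
  intro ks
  induction ks with
  | nil =>
    intro b n hn
    rw [List.nil_append, Psi_cons, Psi_nil]
    calc ∑' d : ℕ, ww x 1 (b + 1 + d) * FF x (b + 1 + d) n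
        = ∑' d : ℕ, FF x (b + 1 + d) n * (cc x (b + 1 + d))⁻¹ := by
          refine tsum_congr fun d => ?_
          rw [ww_one, mul_comm]
      _ = FF x b n * ((n : ℝ≥0∞))⁻¹ := key hx b n hn
  | cons k ks ih =>
    intro b n hn
    rw [List.cons_append, Psi_cons, Psi_cons, ← ENNReal.tsum_mul_right]
    refine tsum_congr fun d => ?_
    rw [ih _ n hn, mul_assoc]

/-- `bump` increments the last entry of a list. -/
def bump : List ℕ → List ℕ
  | [] => []
  | [k] => [k + 1]
  | k :: ks => k :: bump ks

@[simp] lemma bump_single (k : ℕ) : bump [k] = [k + 1] := rfl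
@[simp] lemma bump_cons₂ (k k' : ℕ) (ks : List ℕ) :
    bump (k :: k' :: ks) = k :: bump (k' :: ks) := rfl

lemma bump_append (ks : List ℕ) (t : ℕ) : bump (ks ++ [t]) = ks ++ [t + 1] := by
  induction ks with
  | nil => rfl
  | cons k ks ih =>
    cases ks with
    | nil => rfl
    | cons k' ks' =>
      rw [List.cons_append, List.cons_append, bump_cons₂, ← List.cons_append, ih]
      simp

/-- Transport 2 : absorbing a new right variable into the last left exponent. -/
lemma T2 (hx : x < 1) : ∀ (ks : List ℕ), ks ≠ [] → (∀ k ∈ ks, 1 ≤ k) → ∀ (b n : ℕ),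
    (∑' e : ℕ, (cc x (n + 1 + e))⁻¹ * Psi x ks b (n + 1 + e)) = Psi x (bump ks) b n := by
  intro ks
  induction ks with
  | nil => intro h; exact absurd rfl h
  | cons k ks ih =>
    intro _ hmem b n
    have hk : 1 ≤ k := hmem k (by simp)
    cases ks with
    | nil =>
      rw [bump_single, Psi_cons]
      calc ∑' e : ℕ, (cc x (n + 1 + e))⁻¹ * Psi x [k] b (n + 1 + e)
          = ∑' e : ℕ, ∑' d : ℕ, (cc x (n + 1 + e))⁻¹ *
              (ww x k (b + 1 + d) * FF x (b + 1 + d) (n + 1 + e)) := by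
            refine tsum_congr fun e => ?_
            rw [Psi_cons, ← ENNReal.tsum_mul_left]
            exact tsum_congr fun d => by rfl
        _ = ∑' d : ℕ, ∑' e : ℕ, (cc x (n + 1 + e))⁻¹ *
              (ww x k (b + 1 + d) * FF x (b + 1 + d) (n + 1 + e)) := ENNReal.tsum_comm
        _ = ∑' d : ℕ, ww x k (b + 1 + d) *
              ∑' e : ℕ, FF x (n + 1 + e) (b + 1 + d) * (cc x (n + 1 + e))⁻¹ := by
            refine tsum_congr fun d => ?_
            rw [← ENNReal.tsum_mul_left]
            refine tsum_congr fun e => ?_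
            rw [FF_comm (n + 1 + e) (b + 1 + d)]
            ring
        _ = ∑' d : ℕ, ww x (k + 1) (b + 1 + d) * FF x (b + 1 + d) n := by
            refine tsum_congr fun d => ?_
            rw [key hx n (b + 1 + d) (by omega), FF_comm n (b + 1 + d), ← mul_assoc,
              mul_right_comm, ww_mul_inv _ _ hk]
    | cons k' ks' =>
      rw [bump_cons₂, Psi_cons]
      calc ∑' e : ℕ, (cc x (n + 1 + e))⁻¹ * Psi x (k :: k' :: ks') b (n + 1 + e)
          = ∑' e : ℕ, ∑' d : ℕ, (cc x (n + 1 + e))⁻¹ *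
              (ww x k (b + 1 + d) * Psi x (k' :: ks') (b + 1 + d) (n + 1 + e)) := by
            refine tsum_congr fun e => ?_
            rw [Psi_cons, ← ENNReal.tsum_mul_left]
        _ = ∑' d : ℕ, ∑' e : ℕ, (cc x (n + 1 + e))⁻¹ *
              (ww x k (b + 1 + d) * Psi x (k' :: ks') (b + 1 + d) (n + 1 + e)) :=
            ENNReal.tsum_comm
        _ = ∑' d : ℕ, ww x k (b + 1 + d) *
              ∑' e : ℕ, (cc x (n + 1 + e))⁻¹ * Psi x (k' :: ks') (b + 1 + d) (n + 1 + e) := by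
            refine tsum_congr fun d => ?_
            rw [← ENNReal.tsum_mul_left]
            exact tsum_congr fun e => by ring
        _ = ∑' d : ℕ, ww x k (b + 1 + d) * Psi x (bump (k' :: ks')) (b + 1 + d) n := by
            refine tsum_congr fun d => ?_
            rw [ih (by simp) (fun k hk' => hmem k (by simp [hk'])) (b + 1 + d) n]

/-- Move A : strip trailing `1` on the left, increment last on the right. -/
lemma moveA (hx : x < 1) : ∀ (ls : List ℕ), ls ≠ [] → (∀ l ∈ ls, 1 ≤ l) →
    ∀ (ks : List ℕ) (b : ℕ), Th x (ks ++ [1]) ls b = Th x ks (bump ls) b := by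
  intro ls
  induction ls with
  | nil => intro h; exact absurd rfl h
  | cons l ls ih =>
    intro _ hmem ks b
    have hl : 1 ≤ l := hmem l (by simp)
    cases ls with
    | nil =>
      rw [bump_single, Th_cons, Th_cons]
      refine tsum_congr fun d => ?_
      rw [Th_nil, Th_nil, T1 hx ks 0 (b + 1 + d) (by omega), ← mul_assoc,
        mul_right_comm, ww_mul_inv _ _ hl]
    | cons l' ls' =>
      rw [bump_cons₂, Th_cons, Th_cons]
      refine tsum_congr fun d => ?_
      rw [ih (by simp) (fun l hl' => hmem l (by simp [hl'])) ks (b + 1 + d)]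

/-- Move B : append `1` on the right ↔ increment last on the left. -/
lemma moveB (hx : x < 1) : ∀ (ls ks : List ℕ), ks ≠ [] → (∀ k ∈ ks, 1 ≤ k) →
    ∀ (b : ℕ), Th x ks (ls ++ [1]) b = Th x (bump ks) ls b := by
  intro ls
  induction ls with
  | nil =>
    intro ks hne hmem b
    rw [List.nil_append, Th_cons, Th_nil]
    calc ∑' e : ℕ, ww x 1 (b + 1 + e) * Th x ks [] (b + 1 + e)
        = ∑' e : ℕ, (cc x (b + 1 + e))⁻¹ * Psi x ks 0 (b + 1 + e) := by
          refine tsum_congr fun e => ?_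
          rw [ww_one, Th_nil]
      _ = Psi x (bump ks) 0 b := T2 hx ks hne hmem 0 b
  | cons l ls ih =>
    intro ks hne hmem b
    rw [List.cons_append, Th_cons, Th_cons]
    refine tsum_congr fun d => ?_
    rw [ih ks hne hmem (b + 1 + d)]

lemma Th_nil_left (hx : x < 1) : ∀ (ls : List ℕ) (b : ℕ), Th x [] ls b = Psi x ls b 0 := by
  intro ls
  induction ls with
  | nil => intro b; rw [Th_nil, Psi_nil, Psi_nil, FF_zero_left hx, FF_zero_right hx]
  | cons l ls ih =>
    intro b
    rw [Th_cons, Psi_cons]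
    exact tsum_congr fun d => by rw [ih]

lemma chain1 (hx : x < 1) (ks₀ : List ℕ) (hk₀ : ∀ k ∈ ks₀, 1 ≤ k) (t : ℕ) :
    ∀ (j : ℕ) (ls : List ℕ),
      Th x (ks₀ ++ [t + 1 + j]) ls 0 = Th x (ks₀ ++ [t + 1]) (ls ++ List.replicate j 1) 0 := by
  intro j
  induction j with
  | zero => intro ls; simp
  | succ j ih =>
    intro ls
    have h1 : ks₀ ++ [t + 1 + (j + 1)] = bump (ks₀ ++ [t + 1 + j]) := by
      rw [bump_append]
      simp
      omega
    have hne : ks₀ ++ [t + 1 + j] ≠ [] := by simp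
    have hmem : ∀ k ∈ ks₀ ++ [t + 1 + j], 1 ≤ k := by
      intro k hk
      rcases List.mem_append.1 hk with h | h
      · exact hk₀ k h
      · simp at h; omega
    have hls : (ls ++ [1]) ++ List.replicate j 1 = ls ++ List.replicate (j + 1) 1 := by
      simp [List.append_assoc, List.replicate_succ]
    rw [h1, ← moveB hx ls _ hne hmem 0, ih (ls ++ [1]), hls]

lemma chain2 (hx : x < 1) (ks ls₀ : List ℕ) (hl₀ : ∀ l ∈ ls₀, 1 ≤ l) :
    ∀ (a u : ℕ), 1 ≤ u →
      Th x (ks ++ List.replicate a 1) (ls₀ ++ [u]) 0 = Th x ks (ls₀ ++ [u + a]) 0 := by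
  intro a
  induction a with
  | zero => intro u _; simp
  | succ a ih =>
    intro u hu
    have hmem : ∀ l ∈ ls₀ ++ [u], 1 ≤ l := by
      intro l hl
      rcases List.mem_append.1 hl with h | h
      · exact hl₀ l h
      · simp at h; omega
    rw [List.replicate_succ' (n := a) (a := 1), ← List.append_assoc,
      moveA hx (ls₀ ++ [u]) (by simp) hmem _ 0, bump_append, ih (u + 1) (by omega),
      show u + 1 + a = u + (a + 1) by omega]

/-- The engine : duality with the Ohno deformation. -/
lemma engine (hx : x < 1) (p q : ℕ) (hp : 1 ≤ p) (hq : 1 ≤ q) :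
    Psi x (List.replicate (p - 1) 1 ++ [q + 1]) 0 0
      = Psi x (List.replicate (q - 1) 1 ++ [p + 1]) 0 0 := by
  have hrep : ∀ n : ℕ, ∀ k ∈ List.replicate n 1, 1 ≤ k := by
    intro n k hk
    simp [List.eq_of_mem_replicate hk]
  have e1 : Psi x (List.replicate (p - 1) 1 ++ [q + 1]) 0 0
      = Th x (List.replicate (p - 1) 1 ++ [q + 1]) [] 0 := rfl
  rw [e1, show q + 1 = 0 + 1 + q by omega, chain1 hx _ (hrep (p - 1)) 0 q []]
  rw [List.nil_append, show List.replicate (p - 1) 1 ++ [0 + 1] = List.replicate p 1 by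
    rw [← List.replicate_succ' (n := p - 1) (a := 1)]; congr 1; omega]
  rw [show List.replicate q 1 = List.replicate (q - 1) 1 ++ [1] by
    rw [← List.replicate_succ' (n := q - 1) (a := 1)]; congr 1; omega]
  rw [show List.replicate p 1 = [] ++ List.replicate p 1 from rfl,
    chain2 hx [] (List.replicate (q - 1) 1) (hrep (q - 1)) p 1 le_rfl,
    Th_nil_left hx, Nat.add_comm 1 p]


/-! ### Series expansion in `x` -/

lemma cc_zero (m : ℕ) : cc 0 m = (m : ℝ≥0∞) := tsub_zero _

lemma ww_zero_eq {m j : ℕ} (hj : 1 ≤ j) : ww 0 j m = (((m : ℝ≥0∞)) ^ j)⁻¹ := by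
  rw [ww, cc_zero, show j = (j - 1) + 1 by omega, pow_succ,
    ENNReal.mul_inv (Or.inr (ENNReal.natCast_ne_top m))
      (Or.inl (ENNReal.pow_ne_top (ENNReal.natCast_ne_top m)))]
  simp [Nat.add_sub_cancel]

lemma inv_cc_series (hx : x < 1) {m : ℕ} (hm : 1 ≤ m) :
    (cc x m)⁻¹ = ∑' t : ℕ, x ^ t * (((m : ℝ≥0∞)) ^ (t + 1))⁻¹ := by
  have hm0 : (m : ℝ≥0∞) ≠ 0 := Nat.cast_ne_zero.mpr (by omega)
  have hmt : (m : ℝ≥0∞) ≠ ⊤ := ENNReal.natCast_ne_top m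
  have hfact : (m : ℝ≥0∞) * (1 - x * (m : ℝ≥0∞)⁻¹) = cc x m := by
    rw [ENNReal.mul_sub (fun _ _ => hmt), mul_one, ← mul_assoc,
      mul_comm (m : ℝ≥0∞) x, mul_assoc, ENNReal.mul_inv_cancel hm0 hmt, mul_one, cc]
  rw [← hfact, ENNReal.mul_inv (Or.inl hm0) (Or.inl hmt), ← ENNReal.tsum_geometric,
    ← ENNReal.tsum_mul_left]
  refine tsum_congr fun t => ?_
  rw [mul_pow, pow_succ, ENNReal.mul_inv (Or.inl (pow_ne_zero t hm0))
    (Or.inl (ENNReal.pow_ne_top hmt)), ENNReal.inv_pow]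
  ring

lemma ww_series (hx : x < 1) {k m : ℕ} (hk : 1 ≤ k) (hm : 1 ≤ m) :
    ww x k m = ∑' t : ℕ, x ^ t * ww 0 (k + t) m := by
  have hm0 : (m : ℝ≥0∞) ≠ 0 := Nat.cast_ne_zero.mpr (by omega)
  rw [ww, inv_cc_series hx hm, ← ENNReal.tsum_mul_left]
  refine tsum_congr fun t => ?_
  have hsplit : ((m : ℝ≥0∞) ^ (k + t))⁻¹
      = ((m : ℝ≥0∞) ^ (k - 1))⁻¹ * ((m : ℝ≥0∞) ^ (t + 1))⁻¹ := by
    rw [← ENNReal.mul_inv (Or.inl (pow_ne_zero _ hm0))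
      (Or.inl (ENNReal.pow_ne_top (ENNReal.natCast_ne_top m))), ← pow_add]
    congr 2
    omega
  rw [ww_zero_eq (by omega : 1 ≤ k + t), hsplit]
  ring

/-- Addition of a composition to an index list. -/
noncomputable def addC (ks : List ℕ) (c : Fin ks.length → ℕ) : List ℕ :=
  List.ofFn fun i => ks.get i + c i

lemma addC_cons (k : ℕ) (ks : List ℕ) (t : ℕ) (c : Fin ks.length → ℕ) :
    addC (k :: ks) (Fin.cons t c) = (k + t) :: addC ks c := by
  rw [addC, addC, List.ofFn_succ]
  congr 1

lemma Psi_series (hx : x < 1) :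
    ∀ (ks : List ℕ), (∀ k ∈ ks, 1 ≤ k) → ∀ b : ℕ,
      Psi x ks b 0 = ∑' c : Fin ks.length → ℕ, x ^ (∑ i, c i) * Psi 0 (addC ks c) b 0 := by
  intro ks
  induction ks with
  | nil =>
    intro _ b
    rw [tsum_eq_single (fun _ => 0 : Fin ([] : List ℕ).length → ℕ)
      (fun c hc => absurd (funext fun i => Fin.elim0 i) hc)]
    have haddC : addC ([] : List ℕ) (fun _ => 0) = [] := rfl
    rw [haddC]
    simp [Psi_nil, FF_zero_right hx, FF_zero_right (zero_lt_one : (0:ℝ≥0∞) < 1)]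
  | cons k ks ih =>
    intro hmem b
    have hk : 1 ≤ k := hmem k (by simp)
    have hmem' : ∀ k' ∈ ks, 1 ≤ k' := fun k' h => hmem k' (by simp [h])
    rw [Psi_cons]
    calc ∑' d : ℕ, ww x k (b + 1 + d) * Psi x ks (b + 1 + d) 0
        = ∑' d : ℕ, ∑' t : ℕ, ∑' c : Fin ks.length → ℕ,
            (x ^ t * ww 0 (k + t) (b + 1 + d)) *
            (x ^ (∑ i, c i) * Psi 0 (addC ks c) (b + 1 + d) 0) := by
          refine tsum_congr fun d => ?_
          rw [ww_series hx hk (by omega), ih hmem' (b + 1 + d), ← ENNReal.tsum_mul_right]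
          exact tsum_congr fun t => by rw [← ENNReal.tsum_mul_left]
      _ = ∑' t : ℕ, ∑' d : ℕ, ∑' c : Fin ks.length → ℕ,
            (x ^ t * ww 0 (k + t) (b + 1 + d)) *
            (x ^ (∑ i, c i) * Psi 0 (addC ks c) (b + 1 + d) 0) := ENNReal.tsum_comm
      _ = ∑' t : ℕ, ∑' c : Fin ks.length → ℕ, ∑' d : ℕ,
            (x ^ t * ww 0 (k + t) (b + 1 + d)) *
            (x ^ (∑ i, c i) * Psi 0 (addC ks c) (b + 1 + d) 0) :=
          tsum_congr fun t => ENNReal.tsum_comm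
      _ = ∑' t : ℕ, ∑' c : Fin ks.length → ℕ,
            x ^ (t + ∑ i, c i) * Psi 0 ((k + t) :: addC ks c) b 0 := by
          refine tsum_congr fun t => tsum_congr fun c => ?_
          rw [Psi_cons, pow_add, ← ENNReal.tsum_mul_left]
          refine tsum_congr fun d => by ring
      _ = ∑' t : ℕ, ∑' c : Fin ks.length → ℕ,
            x ^ (∑ i, (Fin.cons t c : Fin (ks.length + 1) → ℕ) i) *
              Psi 0 (addC (k :: ks) (Fin.cons t c)) b 0 := by
          refine tsum_congr fun t => tsum_congr fun c => ?_
          rw [addC_cons, Fin.sum_cons]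
      _ = ∑' p : ℕ × (Fin ks.length → ℕ),
            x ^ (∑ i, (Fin.cons p.1 p.2 : Fin (ks.length + 1) → ℕ) i) *
              Psi 0 (addC (k :: ks) (Fin.cons p.1 p.2)) b 0 :=
          (ENNReal.tsum_prod' (f := fun p : ℕ × (Fin ks.length → ℕ) =>
            x ^ (∑ i, (Fin.cons p.1 p.2 : Fin (ks.length + 1) → ℕ) i) *
              Psi 0 (addC (k :: ks) (Fin.cons p.1 p.2)) b 0)).symm
      _ = ∑' c : Fin (k :: ks).length → ℕ,
            x ^ (∑ i, c i) * Psi 0 (addC (k :: ks) c) b 0 :=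
          Equiv.tsum_eq (Fin.consEquiv fun _ : Fin (k :: ks).length => ℕ)
            (fun c => x ^ (∑ i, c i) * Psi 0 (addC (k :: ks) c) b 0)

/-- The Ohno sum of weight `j` attached to the index list `ks`. -/
noncomputable def OS (ks : List ℕ) (j : ℕ) : ℝ≥0∞ :=
  ∑' c : {c : Fin ks.length → ℕ // ∑ i, c i = j}, Psi 0 (addC ks c.1) 0 0

lemma Psi_series' (hx : x < 1) (ks : List ℕ) (hmem : ∀ k ∈ ks, 1 ≤ k) :
    Psi x ks 0 0 = ∑' j : ℕ, x ^ j * OS ks j := by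
  rw [Psi_series hx ks hmem 0,
    ← Equiv.tsum_eq (Equiv.sigmaFiberEquiv fun c : Fin ks.length → ℕ => ∑ i, c i),
    ENNReal.tsum_sigma']
  refine tsum_congr fun j => ?_
  rw [OS, ← ENNReal.tsum_mul_left]
  refine tsum_congr fun c => ?_
  have h1 : (Equiv.sigmaFiberEquiv fun c : Fin ks.length → ℕ => ∑ i, c i) ⟨j, c⟩ = c.1 := rfl
  rw [h1, c.2]

/-! ### Comparison and convergence -/

lemma ww_cmp (hx : x < 1) (k : ℕ) {m : ℕ} (hm : 1 ≤ m) :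
    ww x k m ≤ (1 - x)⁻¹ * ww 0 k m := by
  have hm0 : (m : ℝ≥0∞) ≠ 0 := Nat.cast_ne_zero.mpr (by omega)
  have hmt : (m : ℝ≥0∞) ≠ ⊤ := ENNReal.natCast_ne_top m
  have key : (m : ℝ≥0∞) * (1 - x) ≤ cc x m := by
    refine ENNReal.le_sub_of_add_le_right (hx.trans_le le_top).ne ?_
    calc (m : ℝ≥0∞) * (1 - x) + x ≤ (m : ℝ≥0∞) * (1 - x) + (m : ℝ≥0∞) * x := by
          refine add_le_add_right ?_ _
          conv_lhs => rw [← one_mul x]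
          exact mul_le_mul_left (by exact_mod_cast hm) x
      _ = (m : ℝ≥0∞) * ((1 - x) + x) := by rw [mul_add]
      _ = (m : ℝ≥0∞) := by rw [tsub_add_cancel_of_le hx.le, mul_one]
  have hinv : (cc x m)⁻¹ ≤ ((m : ℝ≥0∞) * (1 - x))⁻¹ := ENNReal.inv_le_inv.mpr key
  rw [ENNReal.mul_inv (Or.inl hm0) (Or.inl hmt)] at hinv
  rw [ww, ww, cc_zero]
  calc ((m : ℝ≥0∞) ^ (k - 1))⁻¹ * (cc x m)⁻¹
      ≤ ((m : ℝ≥0∞) ^ (k - 1))⁻¹ * ((m : ℝ≥0∞)⁻¹ * (1 - x)⁻¹) :=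
        mul_le_mul_right hinv _
    _ = (1 - x)⁻¹ * (((m : ℝ≥0∞) ^ (k - 1))⁻¹ * (m : ℝ≥0∞)⁻¹) := by ring

lemma Psi_cmp (hx : x < 1) : ∀ (ks : List ℕ) (b : ℕ),
    Psi x ks b 0 ≤ ((1 - x)⁻¹) ^ ks.length * Psi 0 ks b 0 := by
  intro ks
  induction ks with
  | nil =>
    intro b
    rw [Psi_nil, Psi_nil, FF_zero_right hx, FF_zero_right (zero_lt_one : (0:ℝ≥0∞) < 1)]
    simp
  | cons k ks ih =>
    intro b
    rw [Psi_cons, Psi_cons]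
    calc ∑' d : ℕ, ww x k (b + 1 + d) * Psi x ks (b + 1 + d) 0
        ≤ ∑' d : ℕ, ((1 - x)⁻¹ * ww 0 k (b + 1 + d)) *
            (((1 - x)⁻¹) ^ ks.length * Psi 0 ks (b + 1 + d) 0) := by
          refine ENNReal.tsum_le_tsum fun d => ?_
          exact mul_le_mul' (ww_cmp hx k (by omega)) (ih (b + 1 + d))
      _ = ((1 - x)⁻¹) ^ (k :: ks).length *
            ∑' d : ℕ, ww 0 k (b + 1 + d) * Psi 0 ks (b + 1 + d) 0 := by
          rw [← ENNReal.tsum_mul_left]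
          refine tsum_congr fun d => ?_
          rw [List.length_cons, pow_succ]
          ring

lemma teleInv (b : ℕ) :
    ∑' d : ℕ, (((b + 1 + d : ℕ) : ℝ≥0∞) * (((b + 1 + d : ℕ) : ℝ≥0∞) + 1))⁻¹
      = ((b : ℝ≥0∞) + 1)⁻¹ := by
  refine tele (fun a => ((a : ℝ≥0∞) + 1)⁻¹) (fun a => ((a : ℝ≥0∞) * ((a : ℝ≥0∞) + 1))⁻¹)
    ?_ ?_ b
  · intro a
    set A : ℝ≥0∞ := (a : ℝ≥0∞) + 1 with hA
    have hA0 : A ≠ 0 := by simp [hA]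
    have hAt : A ≠ ⊤ := by simp [hA]
    have hcast : ((a + 1 : ℕ) : ℝ≥0∞) = A := by rw [hA]; push_cast; ring
    rw [hcast]
    have hB0 : A + 1 ≠ 0 := by simp
    have hBt : A + 1 ≠ ⊤ := by simp [hA]
    rw [ENNReal.mul_inv (Or.inl hA0) (Or.inl hAt)]
    calc A⁻¹ = (A + 1) * (A⁻¹ * (A + 1)⁻¹) := by
          rw [mul_comm A⁻¹, ← mul_assoc, ENNReal.mul_inv_cancel hB0 hBt, one_mul]
      _ = (A + 1)⁻¹ + A⁻¹ * (A + 1)⁻¹ := by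
          rw [add_mul, one_mul]
          congr 1
          rw [← mul_assoc, ENNReal.mul_inv_cancel hA0 hAt, one_mul]
  · refine tendsto_of_tendsto_of_tendsto_of_le_of_le tendsto_const_nhds
      ENNReal.tendsto_inv_nat_nhds_zero (fun a => zero_le) (fun a => ?_)
    exact ENNReal.inv_le_inv.mpr (by simp)

lemma conv : ∀ (ks : List ℕ), (∀ k ∈ ks, 1 ≤ k) → ∀ (K : ℕ), 2 ≤ K → ∀ (b : ℕ),
    Psi 0 (ks ++ [K]) b 0 ≤ 2 * ((b : ℝ≥0∞) + 1)⁻¹ := by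
  intro ks
  induction ks with
  | nil =>
    intro _ K hK b
    rw [List.nil_append, Psi_cons]
    calc ∑' d : ℕ, ww 0 K (b + 1 + d) * Psi 0 [] (b + 1 + d) 0
        ≤ ∑' d : ℕ, 2 * (((b + 1 + d : ℕ) : ℝ≥0∞) * (((b + 1 + d : ℕ) : ℝ≥0∞) + 1))⁻¹ := by
          refine ENNReal.tsum_le_tsum fun d => ?_
          set M : ℕ := b + 1 + d with hM
          have hM1 : 1 ≤ M := by omega
          rw [Psi_nil, FF_zero_right (zero_lt_one : (0:ℝ≥0∞) < 1), mul_one,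
            ww_zero_eq (by omega : 1 ≤ K)]
          have h1 : (M : ℝ≥0∞) * ((M : ℝ≥0∞) + 1) ≤ 2 * (M : ℝ≥0∞) ^ 2 := by
            have hle : (M : ℝ≥0∞) + 1 ≤ 2 * (M : ℝ≥0∞) := by
              rw [two_mul]
              exact add_le_add_right (by exact_mod_cast hM1) _
            calc (M : ℝ≥0∞) * ((M : ℝ≥0∞) + 1) ≤ (M : ℝ≥0∞) * (2 * (M : ℝ≥0∞)) :=
                  mul_le_mul_right hle _
              _ = 2 * (M : ℝ≥0∞) ^ 2 := by ring
          have h2 : ((M : ℝ≥0∞) ^ K)⁻¹ ≤ ((M : ℝ≥0∞) ^ 2)⁻¹ :=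
            ENNReal.inv_le_inv.mpr (pow_le_pow_right₀ (by exact_mod_cast hM1) hK)
          have h3 : ((M : ℝ≥0∞) ^ 2)⁻¹ ≤ 2 * ((M : ℝ≥0∞) * ((M : ℝ≥0∞) + 1))⁻¹ := by
            have h4 : 2 * (2 * (M : ℝ≥0∞) ^ 2)⁻¹
                ≤ (2 : ℝ≥0∞) * ((M : ℝ≥0∞) * ((M : ℝ≥0∞) + 1))⁻¹ :=
              mul_le_mul_right (ENNReal.inv_le_inv.mpr h1) _
            refine le_trans ?_ h4
            rw [ENNReal.mul_inv (Or.inl (by norm_num)) (Or.inl (by norm_num)), ← mul_assoc,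
              ENNReal.mul_inv_cancel (by norm_num) (by norm_num), one_mul]
          exact h2.trans h3
      _ = 2 * ((b : ℝ≥0∞) + 1)⁻¹ := by rw [ENNReal.tsum_mul_left, teleInv]
  | cons k ks ih =>
    intro hmem K hK b
    have hk : 1 ≤ k := hmem k (by simp)
    rw [List.cons_append, Psi_cons]
    calc ∑' d : ℕ, ww 0 k (b + 1 + d) * Psi 0 (ks ++ [K]) (b + 1 + d) 0
        ≤ ∑' d : ℕ, 2 * (((b + 1 + d : ℕ) : ℝ≥0∞) * (((b + 1 + d : ℕ) : ℝ≥0∞) + 1))⁻¹ := by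
          refine ENNReal.tsum_le_tsum fun d => ?_
          set M : ℕ := b + 1 + d with hM
          have hM1 : 1 ≤ M := by omega
          have hM0 : (M : ℝ≥0∞) ≠ 0 := Nat.cast_ne_zero.mpr (by omega)
          have h1 : ww 0 k M ≤ ((M : ℝ≥0∞))⁻¹ := by
            rw [ww_zero_eq hk]
            refine ENNReal.inv_le_inv.mpr ?_
            calc (M : ℝ≥0∞) = (M : ℝ≥0∞) ^ 1 := (pow_one _).symm
              _ ≤ (M : ℝ≥0∞) ^ k := pow_le_pow_right₀ (by exact_mod_cast hM1) hk
          have h2 := ih (fun k' h => hmem k' (by simp [h])) K hK M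
          calc ww 0 k M * Psi 0 (ks ++ [K]) M 0
              ≤ ((M : ℝ≥0∞))⁻¹ * (2 * ((M : ℝ≥0∞) + 1)⁻¹) := mul_le_mul' h1 h2
            _ = 2 * (((M : ℝ≥0∞)) * (((M : ℝ≥0∞)) + 1))⁻¹ := by
                rw [ENNReal.mul_inv (Or.inl hM0) (Or.inr (by simp))]
                ring
      _ = 2 * ((b : ℝ≥0∞) + 1)⁻¹ := by rw [ENNReal.tsum_mul_left, teleInv]

/-! ### Coefficient extraction -/

lemma extract_aux (A B : ℕ → ℝ≥0∞) (C : ℝ≥0∞) (hC : C ≠ ⊤)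
    (hA : ∀ j, A j ≤ C * 2 ^ j) (hB : ∀ j, B j ≤ C * 2 ^ j)
    (h : ∀ x : ℝ≥0∞, 0 < x → x ≤ 4⁻¹ → ∑' j : ℕ, x ^ j * A j = ∑' j : ℕ, x ^ j * B j)
    (n : ℕ) (ih : ∀ m, m < n → A m = B m) : A n ≤ B n := by
  set D : ℝ≥0∞ := C * 2 ^ (n + 2) with hD
  have hDt : D ≠ ⊤ := ENNReal.mul_ne_top hC (by simp)
  have main : ∀ x : ℝ≥0∞, 0 < x → x ≤ 4⁻¹ → A n ≤ B n + x * D := by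
    intro x hx0 hx4
    have hxt : x ≠ ⊤ := (hx4.trans_lt (ENNReal.inv_lt_top.mpr (by norm_num))).ne
    have hsplit : ∀ (f : ℕ → ℝ≥0∞),
        ∑' j : ℕ, x ^ j * f j
          = (∑ j ∈ Finset.range n, x ^ j * f j) + x ^ n * ∑' j : ℕ, x ^ j * f (j + n) := by
      intro f
      rw [← Summable.sum_add_tsum_nat_add' (f := fun j => x ^ j * f j) (k := n) ENNReal.summable]
      congr 1
      rw [← ENNReal.tsum_mul_left]
      refine tsum_congr fun j => ?_
      rw [pow_add]
      ring
    have heq := h x hx0 hx4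
    rw [hsplit A, hsplit B] at heq
    have hBsum : ∑ j ∈ Finset.range n, x ^ j * B j = ∑ j ∈ Finset.range n, x ^ j * A j := by
      refine Finset.sum_congr rfl fun j hj => ?_
      rw [ih j (Finset.mem_range.1 hj)]
    rw [hBsum] at heq
    have hfin : (∑ j ∈ Finset.range n, x ^ j * A j) ≠ ⊤ := by
      refine (ENNReal.sum_lt_top.mpr fun j _ => ?_).ne
      exact ENNReal.mul_lt_top (ENNReal.pow_ne_top hxt).lt_top
        ((hA j).trans_lt (ENNReal.mul_lt_top hC.lt_top (ENNReal.pow_ne_top (by norm_num : (2:ℝ≥0∞) ≠ ⊤)).lt_top))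
    have heq2 : x ^ n * ∑' j : ℕ, x ^ j * A (j + n) = x ^ n * ∑' j : ℕ, x ^ j * B (j + n) :=
      (ENNReal.add_right_inj hfin).mp heq
    have heq3 : ∑' j : ℕ, x ^ j * A (j + n) = ∑' j : ℕ, x ^ j * B (j + n) :=
      (ENNReal.mul_right_inj (pow_ne_zero n hx0.ne') (ENNReal.pow_ne_top hxt)).mp heq2
    have hle1 : A n ≤ ∑' j : ℕ, x ^ j * A (j + n) := by
      have h0 := ENNReal.le_tsum (f := fun j : ℕ => x ^ j * A (j + n)) 0
      simpa using h0
    have hle2 : ∑' j : ℕ, x ^ j * B (j + n) ≤ B n + x * D := by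
      rw [← Summable.sum_add_tsum_nat_add' (f := fun j => x ^ j * B (j + n)) (k := 1) ENNReal.summable]
      refine add_le_add (le_of_eq (by rw [Finset.sum_range_one, pow_zero, one_mul, zero_add])) ?_
      calc ∑' j : ℕ, x ^ (j + 1) * B (j + 1 + n)
          ≤ ∑' j : ℕ, x ^ (j + 1) * (C * 2 ^ (j + 1 + n)) :=
            ENNReal.tsum_le_tsum fun j => mul_le_mul_right (hB _) _
        _ = x * (C * 2 ^ (n + 1)) * ∑' j : ℕ, (2 * x) ^ j := by
            rw [← ENNReal.tsum_mul_left]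
            exact tsum_congr fun j => by ring
        _ ≤ x * (C * 2 ^ (n + 1)) * 2 := by
            refine mul_le_mul_right ?_ _
            rw [ENNReal.tsum_geometric]
            have h2x : 2 * x ≤ 2⁻¹ := by
              calc 2 * x ≤ 2 * 4⁻¹ := mul_le_mul_right hx4 _
                _ = 2⁻¹ := by
                  rw [show (4 : ℝ≥0∞) = 2 * 2 by norm_num,
                    ENNReal.mul_inv (Or.inl (by norm_num)) (Or.inl (by norm_num)),
                    ← mul_assoc, ENNReal.mul_inv_cancel (by norm_num) (by norm_num), one_mul]
            have hhalf : (2 : ℝ≥0∞)⁻¹ ≤ 1 - 2 * x := by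
              refine ENNReal.le_sub_of_add_le_right
                (ENNReal.mul_ne_top (by norm_num) hxt) ?_
              calc (2:ℝ≥0∞)⁻¹ + 2 * x ≤ 2⁻¹ + 2⁻¹ := add_le_add_right h2x _
                _ = 1 := ENNReal.inv_two_add_inv_two
            calc (1 - 2 * x)⁻¹ ≤ ((2 : ℝ≥0∞)⁻¹)⁻¹ := ENNReal.inv_le_inv.mpr hhalf
              _ = 2 := by simp
        _ = x * D := by
            rw [hD]
            ring
    exact hle1.trans (heq3.le.trans hle2)
  refine ENNReal.le_of_forall_pos_le_add fun ε hε hBtop => ?_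
  by_cases hD0 : D = 0
  · have h0 := main 4⁻¹ (by norm_num) le_rfl
    rw [hD0, mul_zero, add_zero] at h0
    exact h0.trans le_self_add
  · set y : ℝ≥0∞ := min 4⁻¹ ((ε : ℝ≥0∞) / D) with hy
    have hy0 : 0 < y := lt_min (by norm_num)
      (ENNReal.div_pos (by exact_mod_cast hε.ne') hDt)
    have hy4 : y ≤ 4⁻¹ := min_le_left _ _
    have h0 := main y hy0 hy4
    refine h0.trans (add_le_add_right ?_ _)
    calc y * D ≤ ((ε : ℝ≥0∞) / D) * D := mul_le_mul_left (min_le_right _ _) _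
      _ = ε := ENNReal.div_mul_cancel hD0 hDt

lemma extract (A B : ℕ → ℝ≥0∞) (C : ℝ≥0∞) (hC : C ≠ ⊤)
    (hA : ∀ j, A j ≤ C * 2 ^ j) (hB : ∀ j, B j ≤ C * 2 ^ j)
    (h : ∀ x : ℝ≥0∞, 0 < x → x ≤ 4⁻¹ → ∑' j : ℕ, x ^ j * A j = ∑' j : ℕ, x ^ j * B j) :
    ∀ n, A n = B n := by
  intro n
  induction n using Nat.strong_induction_on with
  | _ n ih =>
    exact le_antisymm (extract_aux A B C hC hA hB h n ih)
      (extract_aux B A C hC hB hA (fun x h1 h2 => (h x h1 h2).symm) n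
        (fun m hm => (ih m hm).symm))

/-- Attaching a new smallest element to a strictly monotone tuple. -/
def consMap (n b : ℕ) (p : Σ d : ℕ, {f : Fin n → ℕ+ // StrictMono f ∧ ∀ i, b + 1 + d < (f i : ℕ)}) :
    {f : Fin (n + 1) → ℕ+ // StrictMono f ∧ ∀ i, b < (f i : ℕ)} :=
  ⟨Fin.cons (Nat.toPNat (b + 1 + p.1) (by omega)) p.2.1,
    ⟨fun u v huv => by
      induction v using Fin.cases with
      | zero => exact absurd huv (by simp)
      | succ j =>
        induction u using Fin.cases with
        | zero =>
          rw [Fin.cons_zero, Fin.cons_succ]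
          have hj := p.2.2.2 j
          exact_mod_cast hj
        | succ i =>
          rw [Fin.cons_succ, Fin.cons_succ]
          exact p.2.2.1 (Fin.succ_lt_succ_iff.mp huv),
     fun i => by
      induction i using Fin.cases with
      | zero => rw [Fin.cons_zero]; show b < b + 1 + p.1; omega
      | succ j =>
        rw [Fin.cons_succ]
        have hj := p.2.2.2 j
        omega⟩⟩

lemma consMap_bijective (n b : ℕ) : Function.Bijective (consMap n b) := by
  constructor
  · rintro ⟨d₁, f₁, hf₁⟩ ⟨d₂, f₂, hf₂⟩ h
    have hval := congrArg (fun z => (z.1 : Fin (n + 1) → ℕ+)) h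
    dsimp only [consMap] at hval
    have h0 := congrFun hval 0
    rw [Fin.cons_zero, Fin.cons_zero] at h0
    have hd : d₁ = d₂ := by
      have := congrArg (fun z : ℕ+ => (z : ℕ)) h0
      change b + 1 + d₁ = b + 1 + d₂ at this; omega
    subst hd
    have htail : f₁ = f₂ := by
      funext j
      have := congrFun hval j.succ
      rwa [Fin.cons_succ, Fin.cons_succ] at this
    subst htail
    rfl
  · rintro ⟨f, hmono, hmem⟩
    have h0 : b < (f 0 : ℕ) := hmem 0
    refine ⟨⟨(f 0 : ℕ) - (b + 1), ⟨Fin.tail f,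
      ⟨fun i j hij => hmono (Fin.succ_lt_succ_iff.mpr hij),
       fun i => by
         have h1 : (f 0 : ℕ) < (f i.succ : ℕ) := by
           exact_mod_cast hmono (Fin.succ_pos i)
         simp only [Fin.tail]
         omega⟩⟩⟩, ?_⟩
    apply Subtype.ext
    dsimp only [consMap]
    funext i
    induction i using Fin.cases with
    | zero =>
      rw [Fin.cons_zero]
      apply PNat.coe_injective
      show b + 1 + ((f 0 : ℕ) - (b + 1)) = (f 0 : ℕ)
      omega
    | succ j =>
      rw [Fin.cons_succ]
      rfl

/-- The tuple-splitting equivalence. -/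
noncomputable def tupEquiv (n b : ℕ) :
    (Σ d : ℕ, {f : Fin n → ℕ+ // StrictMono f ∧ ∀ i, b + 1 + d < (f i : ℕ)}) ≃
      {f : Fin (n + 1) → ℕ+ // StrictMono f ∧ ∀ i, b < (f i : ℕ)} :=
  Equiv.ofBijective _ (consMap_bijective n b)


lemma Psi_zero_eq_tsum : ∀ (ks : List ℕ), (∀ k ∈ ks, 1 ≤ k) → ∀ b : ℕ,
    Psi 0 ks b 0 =
      ∑' k : {f : Fin ks.length → ℕ+ // StrictMono f ∧ ∀ i, b < (f i : ℕ)},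
        ∏ i, (((k.1 i : ℕ) : ℝ≥0∞) ^ ks.get i)⁻¹ := by
  intro ks
  induction ks with
  | nil =>
    intro _ b
    rw [tsum_eq_single (⟨fun i => Fin.elim0 i,
        ⟨by intro u v h; exact Fin.elim0 u, fun i => Fin.elim0 i⟩⟩ :
        {f : Fin ([] : List ℕ).length → ℕ+ // StrictMono f ∧ ∀ i, b < (f i : ℕ)})
      (fun k' hk' => absurd (Subtype.ext (funext fun i => Fin.elim0 i)) hk')]
    simp [Psi_nil, FF_zero_right (zero_lt_one : (0:ℝ≥0∞) < 1)]
  | cons k ks ih =>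
    intro hmem b
    have hk1 : 1 ≤ k := hmem k (by simp)
    have hmem' : ∀ k' ∈ ks, 1 ≤ k' := fun a h => hmem a (by simp [h])
    show Psi 0 (k :: ks) b 0 =
      ∑' K : {f : Fin (ks.length + 1) → ℕ+ // StrictMono f ∧ ∀ i, b < (f i : ℕ)},
        ∏ i, (((K.1 i : ℕ) : ℝ≥0∞) ^ (k :: ks).get i)⁻¹
    rw [Psi_cons, ← Equiv.tsum_eq (tupEquiv ks.length b), ENNReal.tsum_sigma']
    refine tsum_congr fun d => ?_
    rw [ih hmem' (b + 1 + d), ← ENNReal.tsum_mul_left]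
    refine tsum_congr fun t => ?_
    have h1 : ((tupEquiv ks.length b) ⟨d, t⟩).1
        = Fin.cons (Nat.toPNat (b + 1 + d) (by omega)) t.1 := rfl
    rw [h1, ww_zero_eq hk1, Fin.prod_univ_succ, Fin.cons_zero]
    exact congrArg _ (Finset.prod_congr rfl fun i _ => by rw [Fin.cons_succ]; rfl)


/-! ### The `ℝ≥0∞`-valued MZV and the bridge to `mzv` -/

noncomputable def zE {r : ℕ} (g : Fin r → ℕ) : ℝ≥0∞ :=
  ∑' k : {k : Fin r → ℕ+ // StrictMono k}, ∏ i, (((k.1 i : ℕ) : ℝ≥0∞) ^ g i)⁻¹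

lemma zE_congr {r s : ℕ} (h : r = s) (f : Fin r → ℕ) (g : Fin s → ℕ)
    (hfg : ∀ i : Fin s, f (Fin.cast h.symm i) = g i) : zE f = zE g := by
  subst h
  have hfg' : f = g := funext fun i => hfg i
  rw [hfg']

lemma Psi_eq_zE (ks : List ℕ) (hmem : ∀ k ∈ ks, 1 ≤ k) :
    Psi 0 ks 0 0 = zE (fun i => ks.get i) := by
  rw [Psi_zero_eq_tsum ks hmem 0, zE]
  exact Equiv.tsum_eq
    (Equiv.subtypeEquivRight
      (p := fun f : Fin ks.length → ℕ+ => StrictMono f ∧ ∀ i, 0 < ((f i : ℕ)))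
      (q := fun f : Fin ks.length → ℕ+ => StrictMono f)
      (fun f => ⟨And.left, fun h => ⟨h, fun i => (f i).2⟩⟩))
    (fun kk : {k : Fin ks.length → ℕ+ // StrictMono k} =>
      ∏ i, (((kk.1 i : ℕ) : ℝ≥0∞) ^ ks.get i)⁻¹)

lemma mzv_eq_toReal {r : ℕ} (g : Fin r → ℕ) (h : zE g ≠ ⊤) :
    mzv g = (zE g).toReal := by
  set G : {k : Fin r → ℕ+ // StrictMono k} → ℝ≥0 :=
    fun k => ∏ i, (((k.1 i : ℕ) : ℝ≥0) ^ g i)⁻¹ with hG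
  have hcoeE : ∀ k, ((G k : ℝ≥0) : ℝ≥0∞) = ∏ i, (((k.1 i : ℕ) : ℝ≥0∞) ^ g i)⁻¹ := by
    intro k
    rw [hG, ENNReal.coe_finset_prod]
    refine Finset.prod_congr rfl fun i _ => ?_
    have hne : ((k.1 i : ℕ) : ℝ≥0) ^ g i ≠ 0 :=
      pow_ne_zero _ (Nat.cast_ne_zero.mpr (k.1 i).2.ne')
    rw [ENNReal.coe_inv hne]
    push_cast
    rfl
  have hzE2 : zE g = ∑' k, ((G k : ℝ≥0) : ℝ≥0∞) := (tsum_congr hcoeE).symm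
  have hsum : Summable G := ENNReal.tsum_coe_ne_top_iff_summable.mp (hzE2 ▸ h)
  have hzE3 : zE g = ((∑' k, G k : ℝ≥0) : ℝ≥0∞) := by rw [hzE2, ENNReal.coe_tsum hsum]
  rw [hzE3, ENNReal.coe_toReal, mzv, NNReal.coe_tsum]
  refine tsum_congr fun k => ?_
  rw [hG, NNReal.coe_prod]
  refine Finset.prod_congr rfl fun i _ => ?_
  rw [NNReal.coe_inv, NNReal.coe_pow, NNReal.coe_natCast, one_div]

/-! ### The special index lists -/

def LL (p q : ℕ) : List ℕ := List.replicate (p - 1) 1 ++ [q + 1]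

lemma LL_length (p q : ℕ) (hp : 1 ≤ p) : (LL p q).length = p := by
  simp [LL]
  omega

lemma LL_mem (p q : ℕ) : ∀ k ∈ LL p q, 1 ≤ k := by
  intro k hk
  rcases List.mem_append.1 hk with h | h
  · simp [List.eq_of_mem_replicate h]
  · simp at h
    omega

lemma LL_get (p q : ℕ) (i : Fin (LL p q).length) :
    (LL p q).get i = if (i : ℕ) < p - 1 then 1 else q + 1 := by
  show (List.replicate (p - 1) 1 ++ [q + 1] : List ℕ).get ⟨i, i.isLt⟩ = if (i : ℕ) < p - 1 then 1 else q + 1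
  rcases Nat.lt_or_ge (i : ℕ) (p - 1) with h | h
  · rw [List.get_eq_getElem, List.getElem_append_left (by simpa using h)]
    simp [h]
  · rw [List.get_eq_getElem, List.getElem_append_right (by simpa using h)]
    have hil : (i : ℕ) < p - 1 + 1 := by
      have h2 := i.isLt
      simpa [LL] using h2
    have hz : (i : ℕ) - (List.replicate (p - 1) 1 : List ℕ).length = 0 := by
      simp
      omega
    simp [hz]
    intro h'; omega

lemma LL_ne_nil (p q : ℕ) : LL p q ≠ [] := by simp [LL]

lemma LL_getLast (p q : ℕ) : (LL p q).getLast (LL_ne_nil p q) = q + 1 := by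
  have h : (LL p q).getLast (LL_ne_nil p q)
      = (List.replicate (p - 1) 1 ++ [q + 1] : List ℕ).getLast (by simp) := rfl
  rw [h, List.getLast_append]
  simp

lemma Psi_fin (ks' : List ℕ) (h1 : ∀ k ∈ ks', 1 ≤ k) (hne : ks' ≠ [])
    (hlast : 2 ≤ ks'.getLast hne) (b : ℕ) : Psi 0 ks' b 0 ≤ 2 * ((b : ℝ≥0∞) + 1)⁻¹ := by
  have hdecomp : ks'.dropLast ++ [ks'.getLast hne] = ks' := List.dropLast_append_getLast hne
  have h := conv ks'.dropLast (fun k hk => h1 k (List.dropLast_subset _ hk))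
    (ks'.getLast hne) hlast b
  rwa [hdecomp] at h


/-! ### Properties of `addC (LL p q) c` -/

lemma addC_mem (ks : List ℕ) (hks : ∀ k ∈ ks, 1 ≤ k) (c : Fin ks.length → ℕ) :
    ∀ k ∈ addC ks c, 1 ≤ k := by
  intro k hk
  rw [addC, List.mem_ofFn] at hk
  obtain ⟨i, rfl⟩ := hk
  have h2 := hks (ks.get i) (ks.get_mem i)
  show 1 ≤ ks.get i + c i
  omega

lemma addC_length (ks : List ℕ) (c : Fin ks.length → ℕ) :
    (addC ks c).length = ks.length := by simp [addC]

lemma addC_get (ks : List ℕ) (c : Fin ks.length → ℕ) (j : Fin (addC ks c).length) :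
    (addC ks c).get j = ks.get (Fin.cast (addC_length ks c) j)
      + c (Fin.cast (addC_length ks c) j) :=
  List.get_ofFn (fun i => ks.get i + c i) j

lemma addC_ne_nil (p q : ℕ) (hp : 1 ≤ p) (c : Fin (LL p q).length → ℕ) :
    addC (LL p q) c ≠ [] := by
  have h1 := addC_length (LL p q) c
  rw [LL_length p q hp] at h1
  intro h
  rw [h] at h1
  simp at h1
  omega

lemma addC_getLast (p q : ℕ) (hp : 1 ≤ p) (hq : 1 ≤ q) (c : Fin (LL p q).length → ℕ) :
    2 ≤ (addC (LL p q) c).getLast (addC_ne_nil p q hp c) := by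
  rw [show (addC (LL p q) c).getLast (addC_ne_nil p q hp c) = (addC (LL p q) c).get
      ⟨(addC (LL p q) c).length - 1, by
        have := List.length_pos_iff.mpr (addC_ne_nil p q hp c); omega⟩ from
      List.getLast_eq_getElem _, addC_get]
  set i : Fin (LL p q).length :=
    Fin.cast (addC_length (LL p q) c) ⟨(addC (LL p q) c).length - 1, by
      have := addC_ne_nil p q hp c
      have hl : 0 < (addC (LL p q) c).length := List.length_pos_iff.mpr this
      omega⟩ with hi
  have hival : (i : ℕ) = p - 1 := by
    rw [hi]
    simp [addC_length, LL_length p q hp]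
  rw [LL_get p q i, hival, if_neg (by omega)]
  omega

lemma addC_fin (p q : ℕ) (hp : 1 ≤ p) (hq : 1 ≤ q) (c : Fin (LL p q).length → ℕ) :
    Psi 0 (addC (LL p q) c) 0 0 ≤ 2 := by
  have h := Psi_fin (addC (LL p q) c) (addC_mem _ (LL_mem p q) c) (addC_ne_nil p q hp c)
    (addC_getLast p q hp hq c) 0
  simpa using h

/-! ### Bounds on the Ohno sums -/

lemma Psi_LL_le (p q : ℕ) (hp : 1 ≤ p) (hq : 1 ≤ q) : Psi 0 (LL p q) 0 0 ≤ 2 := by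
  have h := Psi_fin (LL p q) (LL_mem p q) (LL_ne_nil p q)
    (by rw [LL_getLast]; omega) 0
  simpa using h

lemma OS_le (ks : List ℕ) (hmem : ∀ k ∈ ks, 1 ≤ k) (hC : Psi 0 ks 0 0 ≤ 2) (j : ℕ) :
    OS ks j ≤ 2 ^ (ks.length + 1) * 2 ^ j := by
  have hx : (2⁻¹ : ℝ≥0∞) < 1 := by
    rw [ENNReal.inv_lt_one]
    exact ENNReal.one_lt_two
  have h1 : (2⁻¹ : ℝ≥0∞) ^ j * OS ks j ≤ Psi 2⁻¹ ks 0 0 := by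
    rw [Psi_series' hx ks hmem]
    exact ENNReal.le_tsum j
  have h3 : ((1 - 2⁻¹ : ℝ≥0∞))⁻¹ = 2 := by
    rw [ENNReal.sub_eq_of_eq_add (by norm_num) ENNReal.inv_two_add_inv_two.symm]
    simp
  have h2 : Psi 2⁻¹ ks 0 0 ≤ 2 ^ ks.length * 2 := by
    calc Psi 2⁻¹ ks 0 0 ≤ ((1 - 2⁻¹ : ℝ≥0∞)⁻¹) ^ ks.length * Psi 0 ks 0 0 := Psi_cmp hx ks 0
      _ ≤ 2 ^ ks.length * 2 := by
          rw [h3]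
          exact mul_le_mul_right hC _
  have h4 : OS ks j = 2 ^ j * ((2⁻¹ : ℝ≥0∞) ^ j * OS ks j) := by
    rw [← mul_assoc, ← mul_pow, ENNReal.mul_inv_cancel (by norm_num) (by norm_num),
      one_pow, one_mul]
  rw [h4]
  calc (2:ℝ≥0∞) ^ j * ((2⁻¹ : ℝ≥0∞) ^ j * OS ks j) ≤ 2 ^ j * (2 ^ ks.length * 2) :=
        mul_le_mul_right (h1.trans h2) _
    _ = 2 ^ (ks.length + 1) * 2 ^ j := by ring

/-! ### Equality of Ohno sums (main engine application) -/

lemma OS_eq (p q : ℕ) (hp : 1 ≤ p) (hq : 1 ≤ q) (m : ℕ) :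
    OS (LL p q) m = OS (LL q p) m := by
  set C : ℝ≥0∞ := 2 ^ ((LL p q).length + 1) + 2 ^ ((LL q p).length + 1) with hC
  refine extract (OS (LL p q)) (OS (LL q p)) C ?_ ?_ ?_ ?_ m
  · rw [hC]
    exact ENNReal.add_ne_top.mpr ⟨ENNReal.pow_ne_top (by norm_num), ENNReal.pow_ne_top (by norm_num)⟩
  · intro j
    refine (OS_le (LL p q) (LL_mem p q) (Psi_LL_le p q hp hq) j).trans ?_
    exact mul_le_mul_left (by rw [hC]; exact le_self_add) _
  · intro j
    refine (OS_le (LL q p) (LL_mem q p) (Psi_LL_le q p hq hp) j).trans ?_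
    exact mul_le_mul_left (by rw [hC]; exact le_add_self) _
  · intro x hx0 hx4
    have hx1 : x < 1 := lt_of_le_of_lt hx4 (by
      rw [ENNReal.inv_lt_one]
      norm_num)
    rw [← Psi_series' hx1 _ (LL_mem p q), ← Psi_series' hx1 _ (LL_mem q p)]
    exact engine hx1 p q hp hq


/-! ### From the `mzv` sums to the Ohno sums -/

def compMap (p q m : ℕ) (hlen : (LL p q).length = p)
    (c : {c : Fin (LL p q).length → ℕ // ∑ i, c i = m}) :
    {α : Fin p → ℕ // (∀ i, 0 < α i) ∧ ∑ i, α i = p + m} :=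
  ⟨fun i => c.1 (Fin.cast hlen.symm i) + 1,
   ⟨fun i => Nat.succ_pos _, by
      rw [Finset.sum_add_distrib, Finset.sum_const, Finset.card_univ, Fintype.card_fin,
        smul_eq_mul, mul_one]
      have hre : ∑ i : Fin p, c.1 (Fin.cast hlen.symm i) = ∑ j, c.1 j :=
        Fintype.sum_equiv (finCongr hlen.symm) (fun i => c.1 (Fin.cast hlen.symm i))
          c.1 (fun i => rfl)
      rw [hre, c.2]
      omega⟩⟩

lemma compMap_bijective (p q m : ℕ) (hlen : (LL p q).length = p) :
    Function.Bijective (compMap p q m hlen) := by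
  constructor
  · intro c₁ c₂ h
    apply Subtype.ext
    funext j
    have h2 := congrFun (congrArg Subtype.val h) (Fin.cast hlen j)
    dsimp only [compMap] at h2
    have hcast : Fin.cast hlen.symm (Fin.cast hlen j) = j := rfl
    rw [hcast] at h2
    omega
  · rintro ⟨α, hαpos, hαsum⟩
    refine ⟨⟨fun j => α (Fin.cast hlen j) - 1, ?_⟩, ?_⟩
    · show ∑ j : Fin (LL p q).length, (α (Fin.cast hlen j) - 1) = m
      have h1 : ∀ j : Fin (LL p q).length,
          (α (Fin.cast hlen j) - 1) + 1 = α (Fin.cast hlen j) := fun j => by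
        have := hαpos (Fin.cast hlen j)
        omega
      have h2 : ∑ j, ((α (Fin.cast hlen j) - 1) + 1) = ∑ j, α (Fin.cast hlen j) :=
        Finset.sum_congr rfl fun j _ => h1 j
      have h3 : ∑ j : Fin (LL p q).length, α (Fin.cast hlen j) = ∑ i, α i :=
        Fintype.sum_equiv (finCongr hlen) (fun j => α (Fin.cast hlen j)) α (fun j => rfl)
      rw [Finset.sum_add_distrib, Finset.sum_const, Finset.card_univ, Fintype.card_fin,
        smul_eq_mul, mul_one, h3, hαsum] at h2
      omega
    · apply Subtype.ext
      funext i
      show α (Fin.cast hlen (Fin.cast hlen.symm i)) - 1 + 1 = α i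
      have hcast : Fin.cast hlen (Fin.cast hlen.symm i) = i := rfl
      rw [hcast]
      have := hαpos i
      omega

lemma side_eq (p q m : ℕ) (hp : 1 ≤ p) (hq : 1 ≤ q) :
    (∑' α : {α : Fin p → ℕ // (∀ i, 0 < α i) ∧ ∑ i, α i = p + m},
      mzv fun i => α.1 i + if i.val = p - 1 then q else 0) = (OS (LL p q) m).toReal := by
  have hlen : (LL p q).length = p := LL_length p q hp
  set E := Equiv.ofBijective _ (compMap_bijective p q m hlen) with hE
  rw [← Equiv.tsum_eq E (fun α : {α : Fin p → ℕ // (∀ i, 0 < α i) ∧ ∑ i, α i = p + m} =>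
    mzv fun i => α.1 i + if i.val = p - 1 then q else 0)]
  have hz : ∀ c : {c : Fin (LL p q).length → ℕ // ∑ i, c i = m},
      Psi 0 (addC (LL p q) c.1) 0 0
        = zE (fun i : Fin p => (E c).1 i + if i.val = p - 1 then q else 0) := by
    intro c
    rw [Psi_eq_zE _ (addC_mem _ (LL_mem p q) c.1)]
    refine zE_congr (by rw [addC_length, hlen]) _ _ (fun i => ?_)
    rw [addC_get]
    show (LL p q).get _ + c.1 _ = c.1 (Fin.cast hlen.symm i) + 1 + if (i : ℕ) = p - 1 then q else 0
    have harg : Fin.cast (addC_length (LL p q) c.1)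
        (Fin.cast (by rw [addC_length, hlen] : (addC (LL p q) c.1).length = p).symm i)
          = Fin.cast hlen.symm i := rfl
    rw [harg, LL_get]
    have hlt := i.isLt
    have hival : ((Fin.cast hlen.symm i : Fin (LL p q).length) : ℕ) = (i : ℕ) := rfl
    rw [hival]
    split_ifs with h1 h2 <;> omega
  have hfin : ∀ c : {c : Fin (LL p q).length → ℕ // ∑ i, c i = m},
      Psi 0 (addC (LL p q) c.1) 0 0 ≠ ⊤ :=
    fun c => ((addC_fin p q hp hq c.1).trans_lt (by norm_num)).ne
  calc ∑' c : {c : Fin (LL p q).length → ℕ // ∑ i, c i = m},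
        mzv (fun i => (E c).1 i + if i.val = p - 1 then q else 0)
      = ∑' c : {c : Fin (LL p q).length → ℕ // ∑ i, c i = m},
          (Psi 0 (addC (LL p q) c.1) 0 0).toReal := by
        refine tsum_congr fun c => ?_
        rw [mzv_eq_toReal _ (by rw [← hz c]; exact hfin c), hz c]
    _ = (∑' c : {c : Fin (LL p q).length → ℕ // ∑ i, c i = m},
          Psi 0 (addC (LL p q) c.1) 0 0).toReal := (ENNReal.tsum_toReal_eq hfin).symm
    _ = (OS (LL p q) m).toReal := rfl

end Ohno

/-- Ohno's relation (special case):
`∑_{|α| = p+m} ζ(α_1, …, α_{p-1}, α_p + q) = ∑_{|β| = q+m} ζ(β_1, …, β_{q-1}, β_q + p)`. -/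
theorem ohno_special (p q m : ℕ) (hp : 0 < p) (hq : 0 < q) :
    ∑' α : {α : Fin p → ℕ // (∀ i, 0 < α i) ∧ ∑ i, α i = p + m},
      mzv (fun i => α.1 i + if i.val = p - 1 then q else 0) =
    ∑' β : {β : Fin q → ℕ // (∀ i, 0 < β i) ∧ ∑ i, β i = q + m},
      mzv (fun i => β.1 i + if i.val = q - 1 then p else 0) := by
  rw [Ohno.side_eq p q m hp hq, Ohno.side_eq q p m hq hp, Ohno.OS_eq p q hp hq m]
end

section
/- For positive integers p and q and real a > −1: ∑_{1 ≤ k_1 < ⋯ < k_p} [(k_1+a)(k_2+a)⋯(k_p+a)]^{−1} k_p^{−q} = ∑_{1 ≤ ℓ_1 < ⋯ < ℓ_q} [(ℓ_1+a)(ℓ_2+a)⋯(ℓ_q+a)]^{−1} ℓ_q^{−p}. (This is the r = 0 case of Theorem 1.4 with m = 0, a parametrized duality.) -/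
open scoped ENNReal
open Filter

namespace PDual

noncomputable def P (a : ℝ) (m : ℕ) : ℝ := ∏ j ∈ Finset.range m, ((j : ℝ) + 1 + a)

variable {a : ℝ}

lemma P_pos (ha : -1 < a) (m : ℕ) : 0 < P a m := by
  refine Finset.prod_pos fun j _ => ?_
  have : (0:ℝ) ≤ (j:ℕ) := Nat.cast_nonneg j
  linarith

lemma P_succ (m : ℕ) : P a (m + 1) = P a m * ((m : ℝ) + 1 + a) :=
  Finset.prod_range_succ _ m

/-- The connector. -/
noncomputable def c (a : ℝ) (m n : ℕ) : ℝ := P a m * P a n / P a (m + n)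

lemma c_symm (m n : ℕ) : c a m n = c a n m := by
  unfold c; rw [Nat.add_comm n m, mul_comm (P a n)]

lemma c_zero (ha : -1 < a) (m : ℕ) : c a m 0 = 1 := by
  unfold c
  simp only [Nat.add_zero, P, Finset.range_zero, Finset.prod_empty, mul_one]
  exact div_self (ne_of_gt (P_pos ha m))

lemma c_nonneg (ha : -1 < a) (m n : ℕ) : 0 ≤ c a m n := by
  unfold c
  exact le_of_lt (div_pos (mul_pos (P_pos ha m) (P_pos ha n)) (P_pos ha _))

lemma c_rec (ha : -1 < a) (m n : ℕ) :
    c a m n - c a (m + 1) n = ((n : ℝ) / ((m : ℝ) + 1 + a)) * c a (m + 1) n := by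
  unfold c
  have h1 : P a (m + 1) = P a m * ((m : ℝ) + 1 + a) := P_succ m
  have h2 : P a (m + 1 + n) = P a (m + n) * (((m + n : ℕ) : ℝ) + 1 + a) := by
    rw [show m + 1 + n = (m + n) + 1 by omega]; exact P_succ (m + n)
  have hm : (0:ℝ) < (m:ℝ) + 1 + a := by have := Nat.cast_nonneg (α := ℝ) m; linarith
  have hmn : (0:ℝ) < ((m + n : ℕ):ℝ) + 1 + a := by
    have := Nat.cast_nonneg (α := ℝ) (m + n); linarith
  rw [h1, h2]
  have hPm := (P_pos ha m).ne'
  have hPn := (P_pos ha n).ne'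
  have hPmn := (P_pos ha (m + n)).ne'
  push_cast
  push_cast at hm hmn
  field_simp
  ring

lemma c_succ_right (ha : -1 < a) (m n : ℕ) :
    c a m (n + 1) = c a m n * (((n:ℝ) + 1 + a) / (((m + n : ℕ):ℝ) + 1 + a)) := by
  unfold c
  have h1 : P a (n + 1) = P a n * ((n : ℝ) + 1 + a) := P_succ n
  have h2 : P a (m + (n + 1)) = P a (m + n) * (((m + n : ℕ) : ℝ) + 1 + a) := by
    rw [show m + (n + 1) = (m + n) + 1 by omega]; exact P_succ (m + n)
  rw [h1, h2]
  have hmn : (0:ℝ) < ((m + n : ℕ):ℝ) + 1 + a := by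
    have := Nat.cast_nonneg (α := ℝ) (m + n); linarith
  have hPmn := P_pos ha (m + n)
  field_simp

lemma c_one (ha : -1 < a) (m : ℕ) : c a m 1 = (1 + a) / ((m : ℝ) + 1 + a) := by
  unfold c
  have h1 : P a 1 = 1 + a := by simp [P]
  have h2 : P a (m + 1) = P a m * ((m : ℝ) + 1 + a) := P_succ m
  rw [h1, h2]
  have hPm := P_pos ha m
  have hm : (0:ℝ) < (m:ℝ) + 1 + a := by have := Nat.cast_nonneg (α := ℝ) m; linarith
  field_simp

lemma c_le (ha : -1 < a) (m n : ℕ) (hn : 1 ≤ n) :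
    c a m n ≤ (1 + a) / ((m : ℝ) + 1 + a) := by
  rw [← c_one ha m]
  induction n with
  | zero => omega
  | succ k ih =>
    rcases Nat.eq_or_lt_of_le hn with h | h
    · rw [← h]
    · have hk : 1 ≤ k := by omega
      refine le_trans ?_ (ih hk)
      rw [c_succ_right ha m k]
      have hmn : (0:ℝ) < ((m + k : ℕ):ℝ) + 1 + a := by
        have := Nat.cast_nonneg (α := ℝ) (m + k); linarith
      have hrat : ((k:ℝ) + 1 + a) / (((m + k : ℕ):ℝ) + 1 + a) ≤ 1 := by
        rw [div_le_one hmn]; push_cast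
        have := Nat.cast_nonneg (α := ℝ) m; linarith
      exact mul_le_of_le_one_right (c_nonneg ha m k) hrat

lemma tendsto_c (ha : -1 < a) (n : ℕ) (hn : 1 ≤ n) :
    Tendsto (fun m : ℕ => c a m n) atTop (nhds 0) := by
  have hb : Tendsto (fun m : ℕ => (1 + a) / ((m : ℝ) + 1 + a)) atTop (nhds 0) := by
    have h1 : Tendsto (fun m : ℕ => (m : ℝ) + 1 + a) atTop atTop := by
      have := tendsto_natCast_atTop_atTop (R := ℝ)
      exact tendsto_atTop_add_const_right atTop (1 + a) (by simpa using this) |>.congr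
        (fun m => by ring)
    have := h1.inv_tendsto_atTop
    have h2 := this.const_mul (1 + a)
    simpa [div_eq_mul_inv] using h2
  exact squeeze_zero (fun m => c_nonneg ha m n) (fun m => c_le ha m n hn) hb

lemma transport (ha : -1 < a) (n m : ℕ) (hn : 1 ≤ n) :
    HasSum (fun g : ℕ => (1 / (((m + g + 1 : ℕ) : ℝ) + a)) * c a (m + g + 1) n)
      ((1 / (n : ℝ)) * c a m n) := by
  have key : ∀ j : ℕ, (1 / (((j + 1 : ℕ) : ℝ) + a)) * c a (j + 1) n
      = (1 / (n : ℝ)) * (c a j n - c a (j + 1) n) := by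
    intro j
    rw [c_rec ha j n]
    have hnpos : (0:ℝ) < (n:ℝ) := by exact_mod_cast hn
    push_cast
    field_simp
  have hdiff_nonneg : ∀ g : ℕ, 0 ≤ c a (m + g) n - c a (m + g + 1) n := by
    intro g
    rw [c_rec ha (m + g) n]
    have hm : (0:ℝ) < ((m + g : ℕ):ℝ) + 1 + a := by
      have := Nat.cast_nonneg (α := ℝ) (m + g); linarith
    have := c_nonneg ha (m + g + 1) n
    positivity
  have h1 : HasSum (fun g : ℕ => c a (m + g) n - c a (m + g + 1) n) (c a m n) := by
    rw [hasSum_iff_tendsto_nat_of_nonneg hdiff_nonneg]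
    have hsum : ∀ N : ℕ, ∑ i ∈ Finset.range N, (c a (m + i) n - c a (m + i + 1) n)
        = c a m n - c a (m + N) n := by
      intro N
      have := Finset.sum_range_sub' (f := fun i => c a (m + i) n) N
      simpa [Nat.add_assoc] using this
    simp only [hsum]
    have htail : Tendsto (fun N : ℕ => c a (m + N) n) atTop (nhds 0) := by
      have := (tendsto_c ha n hn).comp (tendsto_add_atTop_nat m)
      refine this.congr fun N => ?_
      simp [Function.comp, Nat.add_comm]
    have := (tendsto_const_nhds (x := c a m n) (f := atTop (α := ℕ))).sub htail
    simpa using this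
  have h2 := h1.mul_left (1 / (n : ℝ))
  have heq : (fun g : ℕ => (1 / (((m + g + 1 : ℕ) : ℝ) + a)) * c a (m + g + 1) n)
      = fun g : ℕ => (1 / (n : ℝ)) * (c a (m + g) n - c a (m + g + 1) n) :=
    funext fun g => key (m + g)
  rw [heq]
  exact h2


noncomputable def F (a : ℝ) (k : ℕ) : ℝ≥0∞ := ENNReal.ofReal (1 / ((k : ℝ) + a))

noncomputable def A (a : ℝ) : ℕ → (ℕ → ℝ≥0∞) → ℕ → ℝ≥0∞
  | 0, w, m => w m
  | s + 1, w, m => ∑' g : ℕ, F a (m + g + 1) * A a s w (m + g + 1)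

lemma A_zero (w : ℕ → ℝ≥0∞) (m : ℕ) : A a 0 w m = w m := rfl

lemma A_succ (s : ℕ) (w : ℕ → ℝ≥0∞) (m : ℕ) :
    A a (s + 1) w m = ∑' g : ℕ, F a (m + g + 1) * A a s w (m + g + 1) := rfl

lemma A_congr (s : ℕ) (w w' : ℕ → ℝ≥0∞) (m : ℕ) (h : ∀ k, m < k → w k = w' k) :
    A a (s + 1) w m = A a (s + 1) w' m := by
  induction s generalizing m with
  | zero =>
    rw [A_succ, A_succ]
    exact tsum_congr fun g => by rw [A_zero, A_zero, h _ (by omega)]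
  | succ s ih =>
    rw [A_succ, A_succ]
    exact tsum_congr fun g => by rw [ih (m + g + 1) (fun k hk => h k (by omega))]

lemma A_const_mul (s : ℕ) (C : ℝ≥0∞) (w : ℕ → ℝ≥0∞) (m : ℕ) :
    A a s (fun k => C * w k) m = C * A a s w m := by
  induction s generalizing m with
  | zero => rfl
  | succ s ih =>
    rw [A_succ, A_succ, ← ENNReal.tsum_mul_left]
    exact tsum_congr fun g => by rw [ih]; ring

lemma A_tsum {ι : Type} (s : ℕ) (H : ι → ℕ → ℝ≥0∞) (m : ℕ) :
    A a s (fun k => ∑' i, H i k) m = ∑' i, A a s (H i) m := by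
  induction s generalizing m with
  | zero => rfl
  | succ s ih =>
    rw [A_succ]
    calc ∑' g : ℕ, F a (m + g + 1) * A a s (fun k => ∑' i, H i k) (m + g + 1)
        = ∑' g : ℕ, ∑' i, F a (m + g + 1) * A a s (H i) (m + g + 1) := by
          refine tsum_congr fun g => ?_
          rw [ih, ENNReal.tsum_mul_left]
      _ = ∑' i, ∑' g : ℕ, F a (m + g + 1) * A a s (H i) (m + g + 1) := ENNReal.tsum_comm
      _ = ∑' i, A a (s + 1) (H i) m := by
          exact tsum_congr fun i => (A_succ s (H i) m).symm

lemma A_comm (s t : ℕ) (H : ℕ → ℕ → ℝ≥0∞) (m m' : ℕ) :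
    A a s (fun n => A a t (fun k => H n k) m') m
      = A a t (fun k => A a s (fun n => H n k) m) m' := by
  induction t generalizing m' with
  | zero => rfl
  | succ t ih =>
    calc A a s (fun n => A a (t + 1) (fun k => H n k) m') m
        = A a s (fun n => ∑' g : ℕ, F a (m' + g + 1) * A a t (fun k => H n k) (m' + g + 1)) m :=
          rfl
      _ = ∑' g : ℕ, A a s (fun n => F a (m' + g + 1) * A a t (fun k => H n k) (m' + g + 1)) m :=
          A_tsum s _ m
      _ = ∑' g : ℕ, F a (m' + g + 1) * A a s (fun n => A a t (fun k => H n k) (m' + g + 1)) m :=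
          tsum_congr fun g => A_const_mul s _ _ m
      _ = ∑' g : ℕ, F a (m' + g + 1) * A a t (fun k => A a s (fun n => H n k) m) (m' + g + 1) :=
          tsum_congr fun g => by rw [ih]
      _ = A a (t + 1) (fun k => A a s (fun n => H n k) m) m' := (A_succ _ _ _).symm

lemma inv_factor_nonneg (ha : -1 < a) (k : ℕ) (hk : 1 ≤ k) : 0 ≤ 1 / ((k : ℝ) + a) := by
  have h1 : (1:ℝ) ≤ (k:ℝ) := by exact_mod_cast hk
  have h2 : 0 < (k:ℝ) + a := by linarith
  positivity

lemma transportE (ha : -1 < a) (n m : ℕ) (hn : 1 ≤ n) :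
    ∑' g : ℕ, F a (m + g + 1) * ENNReal.ofReal (c a (m + g + 1) n)
      = ENNReal.ofReal ((1 / (n : ℝ)) * c a m n) := by
  have hs := transport ha n m hn
  have hnn : ∀ g : ℕ, 0 ≤ (1 / (((m + g + 1 : ℕ) : ℝ) + a)) * c a (m + g + 1) n := fun g =>
    mul_nonneg (inv_factor_nonneg ha _ (by omega)) (c_nonneg ha _ n)
  calc ∑' g : ℕ, F a (m + g + 1) * ENNReal.ofReal (c a (m + g + 1) n)
      = ∑' g : ℕ, ENNReal.ofReal ((1 / (((m + g + 1 : ℕ) : ℝ) + a)) * c a (m + g + 1) n) :=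
        tsum_congr fun g =>
          (ENNReal.ofReal_mul (inv_factor_nonneg ha _ (by omega))).symm
    _ = ENNReal.ofReal (∑' g : ℕ, (1 / (((m + g + 1 : ℕ) : ℝ) + a)) * c a (m + g + 1) n) :=
        (ENNReal.ofReal_tsum_of_nonneg hnn hs.summable).symm
    _ = ENNReal.ofReal ((1 / (n : ℝ)) * c a m n) := by rw [hs.tsum_eq]

lemma A_c (ha : -1 < a) (n : ℕ) (hn : 1 ≤ n) (t m : ℕ) :
    A a t (fun k => ENNReal.ofReal (c a k n)) m
      = ENNReal.ofReal (c a m n * (1 / (n : ℝ)) ^ t) := by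
  induction t generalizing m with
  | zero => rw [A_zero, pow_zero, mul_one]
  | succ t ih =>
    rw [A_succ]
    calc ∑' g : ℕ, F a (m + g + 1) * A a t (fun k => ENNReal.ofReal (c a k n)) (m + g + 1)
        = ∑' g : ℕ, (F a (m + g + 1) * ENNReal.ofReal (c a (m + g + 1) n))
            * ENNReal.ofReal ((1 / (n : ℝ)) ^ t) := by
          refine tsum_congr fun g => ?_
          rw [ih, ENNReal.ofReal_mul (c_nonneg ha _ n), mul_assoc]
      _ = (∑' g : ℕ, F a (m + g + 1) * ENNReal.ofReal (c a (m + g + 1) n))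
            * ENNReal.ofReal ((1 / (n : ℝ)) ^ t) := ENNReal.tsum_mul_right
      _ = ENNReal.ofReal ((1 / (n : ℝ)) * c a m n) * ENNReal.ofReal ((1 / (n : ℝ)) ^ t) := by
          rw [transportE ha n m hn]
      _ = ENNReal.ofReal (c a m n * (1 / (n : ℝ)) ^ (t + 1)) := by
          rw [← ENNReal.ofReal_mul (mul_nonneg (by positivity) (c_nonneg ha m n))]
          ring_nf


lemma strictMono_tail {s : ℕ} {k : Fin (s + 2) → ℕ+} (hk : StrictMono k) :
    StrictMono (Fin.tail k) := fun i j h => hk (Fin.succ_lt_succ_iff.mpr h)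

lemma strictMono_cons {s : ℕ} (x : ℕ+) (k : Fin (s + 1) → ℕ+) (hk : StrictMono k)
    (hx : x < k 0) : StrictMono (Fin.cons x k) := by
  rw [Fin.strictMono_iff_lt_succ]
  intro i
  induction i using Fin.cases with
  | zero => simpa using hx
  | succ j =>
    rw [← Fin.succ_castSucc, Fin.cons_succ, Fin.cons_succ]
    exact hk (Fin.castSucc_lt_succ (i := j))

/-- Base equivalence: single-element chains above `m`. -/
def e1 (m : ℕ) : ℕ ≃ {k : Fin 1 → ℕ+ // StrictMono k ∧ m < (k 0 : ℕ)} where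
  toFun g := ⟨fun _ => ⟨m + g + 1, by omega⟩, Subsingleton.strictMono _, by show m < m + g + 1; omega⟩
  invFun k := (k.1 0 : ℕ) - m - 1
  left_inv g := by show m + g + 1 - m - 1 = g; omega
  right_inv k := by
    obtain ⟨k, hk, hk0⟩ := k
    apply Subtype.ext
    funext i
    have hi : i = 0 := Subsingleton.elim i 0
    subst hi
    apply Subtype.ext
    show m + ((k 0 : ℕ) - m - 1) + 1 = (k 0 : ℕ)
    omega

/-- Step equivalence: peel off the first element of a chain. -/
def eS (m s : ℕ) : {k : Fin (s + 2) → ℕ+ // StrictMono k ∧ m < (k 0 : ℕ)} ≃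
    Σ g : ℕ, {k : Fin (s + 1) → ℕ+ // StrictMono k ∧ m + g + 1 < (k 0 : ℕ)} where
  toFun k := ⟨(k.1 0 : ℕ) - m - 1, ⟨Fin.tail k.1, strictMono_tail k.2.1, by
    have h01 : (k.1 0 : ℕ) < (k.1 (Fin.succ 0) : ℕ) := by
      exact_mod_cast k.2.1 (Fin.succ_pos (0 : Fin (s + 1)))
    have hk0 := k.2.2
    show m + ((k.1 0 : ℕ) - m - 1) + 1 < (k.1 (Fin.succ 0) : ℕ)
    omega⟩⟩
  invFun x := ⟨Fin.cons ⟨m + x.1 + 1, by omega⟩ x.2.1,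
    strictMono_cons _ _ x.2.2.1 (by
      have h := x.2.2.2
      show (⟨m + x.1 + 1, by omega⟩ : ℕ+) < x.2.1 0
      exact_mod_cast h),
    by show m < m + x.1 + 1; omega⟩
  left_inv k := by
    obtain ⟨k, hk, hk0⟩ := k
    apply Subtype.ext
    show Fin.cons _ (Fin.tail k) = k
    conv_rhs => rw [← Fin.cons_self_tail k]
    refine congrArg (fun x => Fin.cons x (Fin.tail k)) ?_
    apply Subtype.ext
    show m + ((k 0 : ℕ) - m - 1) + 1 = (k 0 : ℕ)
    omega
  right_inv x := by
    obtain ⟨g, k, hk, hk0⟩ := x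
    refine Sigma.subtype_ext ?_ ?_
    · show ((Fin.cons (⟨m + g + 1, by omega⟩ : ℕ+) k : Fin (s + 2) → ℕ+) 0 : ℕ) - m - 1 = g
      show m + g + 1 - m - 1 = g
      omega
    · exact Fin.tail_cons (α := fun _ => ℕ+) (n := s + 1) (⟨m + g + 1, by omega⟩ : ℕ+) k

lemma chain_sum (s : ℕ) (w : ℕ → ℝ≥0∞) (m : ℕ) :
    A a (s + 1) w m
      = ∑' k : {k : Fin (s + 1) → ℕ+ // StrictMono k ∧ m < (k 0 : ℕ)},
          (∏ i, F a ((k.1 i : ℕ))) * w ((k.1 (Fin.last s) : ℕ)) := by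
  induction s generalizing m with
  | zero =>
    rw [A_succ]
    rw [← Equiv.tsum_eq (e1 m)
      (fun k : {k : Fin 1 → ℕ+ // StrictMono k ∧ m < (k 0 : ℕ)} =>
        (∏ i, F a ((k.1 i : ℕ))) * w ((k.1 (Fin.last 0) : ℕ)))]
    refine tsum_congr fun g => ?_
    show F a (m + g + 1) * A a 0 w (m + g + 1) = _
    rw [A_zero]
    simp [e1, Fin.prod_univ_one]
  | succ s ih =>
    rw [A_succ]
    calc ∑' g : ℕ, F a (m + g + 1) * A a (s + 1) w (m + g + 1)
        = ∑' g : ℕ, ∑' k : {k : Fin (s + 1) → ℕ+ // StrictMono k ∧ m + g + 1 < (k 0 : ℕ)},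
            F a (m + g + 1) * ((∏ i, F a ((k.1 i : ℕ))) * w ((k.1 (Fin.last s) : ℕ))) := by
          refine tsum_congr fun g => ?_
          rw [ih (m + g + 1), ENNReal.tsum_mul_left]
      _ = ∑' x : Σ g : ℕ, {k : Fin (s + 1) → ℕ+ // StrictMono k ∧ m + g + 1 < (k 0 : ℕ)},
            F a (m + x.1 + 1) * ((∏ i, F a ((x.2.1 i : ℕ))) * w ((x.2.1 (Fin.last s) : ℕ))) :=
          (ENNReal.tsum_sigma'
            (fun x : Σ g : ℕ, {k : Fin (s + 1) → ℕ+ // StrictMono k ∧ m + g + 1 < (k 0 : ℕ)} =>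
              F a (m + x.1 + 1) * ((∏ i, F a ((x.2.1 i : ℕ))) * w ((x.2.1 (Fin.last s) : ℕ))))).symm
      _ = ∑' k : {k : Fin (s + 2) → ℕ+ // StrictMono k ∧ m < (k 0 : ℕ)},
            (∏ i, F a ((k.1 i : ℕ))) * w ((k.1 (Fin.last (s + 1)) : ℕ)) := by
          rw [← Equiv.tsum_eq (eS m s)
            (fun x : Σ g : ℕ, {k : Fin (s + 1) → ℕ+ // StrictMono k ∧ m + g + 1 < (k 0 : ℕ)} =>
              F a (m + x.1 + 1) * ((∏ i, F a ((x.2.1 i : ℕ))) * w ((x.2.1 (Fin.last s) : ℕ))))]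
          refine tsum_congr fun k => ?_
          obtain ⟨k, hk, hk0⟩ := k
          have hfst : m + ((k 0 : ℕ) - m - 1) + 1 = (k 0 : ℕ) := by omega
          show F a (m + ((k 0 : ℕ) - m - 1) + 1)
              * ((∏ i, F a ((Fin.tail k i : ℕ))) * w ((Fin.tail k (Fin.last s) : ℕ)))
            = (∏ i, F a ((k i : ℕ))) * w ((k (Fin.last (s + 1)) : ℕ))
          conv_rhs => rw [Fin.prod_univ_succ, mul_assoc]
          rw [hfst]
          show F a ((k 0 : ℕ)) * ((∏ i : Fin (s + 1), F a ((k i.succ : ℕ)))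
              * w ((k ((Fin.last s).succ) : ℕ)))
            = F a ((k 0 : ℕ)) * ((∏ i : Fin (s + 1), F a ((k i.succ : ℕ)))
              * w ((k (Fin.last (s + 1)) : ℕ)))
          rw [Fin.succ_last]


lemma tsum_ofReal_eq {ι : Type*} (h : ι → ℝ) (hnn : ∀ i, 0 ≤ h i) :
    ∑' i, h i = (∑' i, ENNReal.ofReal (h i)).toReal := by
  by_cases hs : Summable h
  · rw [← ENNReal.ofReal_tsum_of_nonneg hnn hs, ENNReal.toReal_ofReal (tsum_nonneg hnn)]
  · rw [tsum_eq_zero_of_not_summable hs]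
    have htop : ∑' i, ENNReal.ofReal (h i) = ∞ := by
      by_contra hne
      have h1 : Summable (fun i => (h i).toNNReal) :=
        ENNReal.tsum_coe_ne_top_iff_summable.mp hne
      have h2 : Summable h :=
        (NNReal.summable_coe.mpr h1).congr fun i => Real.coe_toNNReal _ (hnn i)
      exact hs h2
    rw [htop, ENNReal.toReal_top]

lemma term_eq (ha : -1 < a) {n : ℕ} (t : ℕ) (k : Fin (n + 1) → ℕ+) :
    ENNReal.ofReal ((∏ i, (1 : ℝ) / (((k i : ℕ) : ℝ) + a))
        * (1 / (((k (Fin.last n) : ℕ)) : ℝ) ^ t))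
      = (∏ i, F a ((k i : ℕ)))
        * ENNReal.ofReal (1 / (((k (Fin.last n) : ℕ)) : ℝ) ^ t) := by
  have hP : 0 ≤ ∏ i, (1 : ℝ) / (((k i : ℕ) : ℝ) + a) :=
    Finset.prod_nonneg fun i _ => inv_factor_nonneg ha _ (k i).2
  have hP' : ∀ i ∈ (Finset.univ : Finset (Fin (n + 1))), 0 ≤ (1 : ℝ) / (((k i : ℕ) : ℝ) + a) :=
    fun i _ => inv_factor_nonneg ha _ (k i).2
  rw [ENNReal.ofReal_mul hP, ENNReal.ofReal_prod_of_nonneg hP']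
  rfl

lemma side (ha : -1 < a) (s t : ℕ) :
    ∑' k : {k : Fin (s + 1) → ℕ+ // StrictMono k},
        ENNReal.ofReal ((∏ i, (1 : ℝ) / (((k.1 i : ℕ) : ℝ) + a))
          * (1 / (((k.1 (Fin.last s) : ℕ)) : ℝ) ^ (t + 1)))
      = A a (s + 1) (fun n => ENNReal.ofReal (1 / (n : ℝ) ^ (t + 1))) 0 := by
  let e : {k : Fin (s + 1) → ℕ+ // StrictMono k}
      ≃ {k : Fin (s + 1) → ℕ+ // StrictMono k ∧ 0 < (k 0 : ℕ)} :=
    Equiv.subtypeEquivRight fun k => ⟨fun h => ⟨h, (k 0).2⟩, fun h => h.1⟩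
  calc ∑' k : {k : Fin (s + 1) → ℕ+ // StrictMono k},
        ENNReal.ofReal ((∏ i, (1 : ℝ) / (((k.1 i : ℕ) : ℝ) + a))
          * (1 / (((k.1 (Fin.last s) : ℕ)) : ℝ) ^ (t + 1)))
      = ∑' k : {k : Fin (s + 1) → ℕ+ // StrictMono k ∧ 0 < (k 0 : ℕ)},
        ENNReal.ofReal ((∏ i, (1 : ℝ) / (((k.1 i : ℕ) : ℝ) + a))
          * (1 / (((k.1 (Fin.last s) : ℕ)) : ℝ) ^ (t + 1))) :=
        Equiv.tsum_eq e (fun k => ENNReal.ofReal ((∏ i, (1 : ℝ) / (((k.1 i : ℕ) : ℝ) + a))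
          * (1 / (((k.1 (Fin.last s) : ℕ)) : ℝ) ^ (t + 1))))
    _ = ∑' k : {k : Fin (s + 1) → ℕ+ // StrictMono k ∧ 0 < (k 0 : ℕ)},
          (∏ i, F a ((k.1 i : ℕ)))
            * ENNReal.ofReal (1 / (((k.1 (Fin.last s) : ℕ)) : ℝ) ^ (t + 1)) :=
        tsum_congr fun k => term_eq ha (t + 1) k.1
    _ = A a (s + 1) (fun n => ENNReal.ofReal (1 / (n : ℝ) ^ (t + 1))) 0 :=
        (chain_sum s (fun n => ENNReal.ofReal (1 / (n : ℝ) ^ (t + 1))) 0).symm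

lemma central (ha : -1 < a) (s t : ℕ) :
    A a (s + 1) (fun n => ENNReal.ofReal (1 / (n : ℝ) ^ (t + 1))) 0
      = A a (t + 1) (fun n => ENNReal.ofReal (1 / (n : ℝ) ^ (s + 1))) 0 := by
  have h1 : ∀ s t : ℕ, A a (s + 1) (fun n => ENNReal.ofReal (1 / (n : ℝ) ^ (t + 1))) 0
      = A a (s + 1) (fun n => A a (t + 1) (fun k => ENNReal.ofReal (c a n k)) 0) 0 := by
    intro s t
    apply A_congr
    intro n hn
    have hcs : (fun k => ENNReal.ofReal (c a n k)) = fun k => ENNReal.ofReal (c a k n) :=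
      funext fun k => by rw [c_symm]
    rw [hcs, A_c ha n hn (t + 1) 0, c_symm, c_zero ha, one_mul, one_div_pow]
  rw [h1 s t, h1 t s, A_comm (s + 1) (t + 1) (fun n k => ENNReal.ofReal (c a n k)) 0 0]
  exact congrArg (fun W => A a (t + 1) W 0) (funext fun k =>
    congrArg (fun W' => A a (s + 1) W' 0) (funext fun n => by rw [c_symm]))

end PDual

/-- Parametrized duality (the `r = 0`, `m = 0` case of Theorem 1.4). -/
theorem parametrized_duality (p q : ℕ) (hp : 0 < p) (hq : 0 < q) (a : ℝ) (ha : -1 < a) :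
    ∑' k : {k : Fin p → ℕ+ // StrictMono k},
      (∏ i, (1 : ℝ) / (((k.1 i : ℕ) : ℝ) + a)) *
        (1 / ((k.1 ⟨p - 1, by omega⟩ : ℕ) : ℝ) ^ q) =
    ∑' l : {l : Fin q → ℕ+ // StrictMono l},
      (∏ i, (1 : ℝ) / (((l.1 i : ℕ) : ℝ) + a)) *
        (1 / ((l.1 ⟨q - 1, by omega⟩ : ℕ) : ℝ) ^ p) := by
  obtain ⟨pp, rfl⟩ : ∃ pp, p = pp + 1 := ⟨p - 1, by omega⟩
  obtain ⟨qq, rfl⟩ : ∃ qq, q = qq + 1 := ⟨q - 1, by omega⟩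
  rw [PDual.tsum_ofReal_eq _ (fun k => mul_nonneg
      (Finset.prod_nonneg fun i _ => PDual.inv_factor_nonneg ha _ (k.1 i).2) (by positivity)),
    PDual.tsum_ofReal_eq _ (fun k => mul_nonneg
      (Finset.prod_nonneg fun i _ => PDual.inv_factor_nonneg ha _ (k.1 i).2) (by positivity))]
  congr 1
  have hL : (⟨pp + 1 - 1, by omega⟩ : Fin (pp + 1)) = Fin.last pp := rfl
  have hR : (⟨qq + 1 - 1, by omega⟩ : Fin (qq + 1)) = Fin.last qq := rfl
  rw [hL, hR, PDual.side ha pp qq, PDual.side ha qq pp]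
  exact PDual.central ha pp qq
end
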